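/- arXiv:1407.1868 — 5 statements merged into one kernel-verified Lean document; each statement's English description precedes it below -/
import Mathlib

section
/- Let E be a 2-dimensional real Hilbert space and let φ : E → E be a (not necessarily linear or bijective) map such that Area(φ(a), φ(b)) = Area(a, b) for all a, b ∈ E. Then there exist a function ε : E → {−1, 1} and a linear operator A : E → E with |det A| = 1 such that φ(a) = ε(a) · (A a) for every a ∈ E. -/
lemma expand2' {E : Type*} [AddCommGroup E] [Module ℝ E]
    (ω : E →ₗ[ℝ] E →ₗ[ℝ] ℝ) (halt : ∀ v, ω v v = 0)
    (b : Module.Basis (Fin 2) ℝ E) (x y : E) :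
    ω x y = (b.repr x 0 * b.repr y 1 - b.repr x 1 * b.repr y 0) * ω (b 0) (b 1) := by
  have hsym : ω (b 1) (b 0) = - ω (b 0) (b 1) := by
    have h := halt (b 0 + b 1)
    simp only [map_add, LinearMap.add_apply, halt] at h
    linarith
  have hx : (b.repr x 0) • b 0 + (b.repr x 1) • b 1 = x := by
    have := b.sum_repr x; rwa [Fin.sum_univ_two] at this
  have hy : (b.repr y 0) • b 0 + (b.repr y 1) • b 1 = y := by
    have := b.sum_repr y; rwa [Fin.sum_univ_two] at this
  calc ω x y = ω ((b.repr x 0) • b 0 + (b.repr x 1) • b 1)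
        ((b.repr y 0) • b 0 + (b.repr y 1) • b 1) := by rw [hx, hy]
  _ = _ := by
    simp only [map_add, map_smul, LinearMap.add_apply, LinearMap.smul_apply, smul_eq_mul,
      halt, hsym]
    ring


/-- The area of the parallelogram spanned by two vectors of a real inner
product space: `Area(a,b) = sqrt(‖a‖² ‖b‖² − ⟨a,b⟩²)`. -/
noncomputable def parArea {E : Type*} [NormedAddCommGroup E] [InnerProductSpace ℝ E]
    (a b : E) : ℝ :=
  Real.sqrt (‖a‖ ^ 2 * ‖b‖ ^ 2 - (inner ℝ a b : ℝ) ^ 2)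

/-- any map of a 2-dimensional real Hilbert space into itself preserving
the area of parallelograms is, up to signs, a linear operator with `|det| = 1`. -/
theorem stmt0 {E : Type*} [NormedAddCommGroup E] [InnerProductSpace ℝ E] [CompleteSpace E]
    (hdim : Module.finrank ℝ E = 2)
    (φ : E → E)
    (hφ : ∀ a b : E, parArea (φ a) (φ b) = parArea a b) :
    ∃ (ε : E → ℝ) (A : E →ₗ[ℝ] E),
      (∀ a, ε a = 1 ∨ ε a = -1) ∧ |LinearMap.det A| = 1 ∧
      ∀ a, φ a = ε a • A a := by
  haveI hFD : FiniteDimensional ℝ E := FiniteDimensional.of_finrank_eq_succ hdim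
  haveI : Fact (Module.finrank ℝ E = 2) := ⟨hdim⟩
  set B : OrthonormalBasis (Fin 2) ℝ E :=
    (stdOrthonormalBasis ℝ E).reindex (finCongr hdim) with hB
  set e : Module.Basis (Fin 2) ℝ E := B.toBasis with he
  set o : Orientation ℝ E (Fin 2) := e.orientation with ho
  have habs : ∀ a b : E, parArea a b = |o.areaForm a b| := by
    intro a b
    have h := o.inner_sq_add_areaForm_sq a b
    rw [parArea, show ‖a‖ ^ 2 * ‖b‖ ^ 2 - (inner ℝ a b : ℝ) ^ 2 = (o.areaForm a b) ^ 2 by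
      linarith, Real.sqrt_sq_eq_abs]
  have hK : ∀ a b : E, |o.areaForm (φ a) (φ b)| = |o.areaForm a b| := by
    intro a b; rw [← habs, ← habs, hφ]
  have halt : ∀ v, o.areaForm v v = 0 := o.areaForm_apply_self
  set D : ℝ := o.areaForm (e 0) (e 1) with hDdef
  have hD : |D| = 1 := by
    have h1 : D = o.volumeForm ![e 0, e 1] := o.areaForm_to_volumeForm _ _
    have h2 : ![e 0, e 1] = ⇑B := by
      funext i; fin_cases i <;> simp [he]
    rw [h1, h2]
    exact o.abs_volumeForm_apply_of_orthonormal B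
  set f : Fin 2 → E := ![φ (e 0), φ (e 1)] with hf
  set Dφ : ℝ := o.areaForm (f 0) (f 1) with hDφdef
  have hDφ : |Dφ| = 1 := by
    have := hK (e 0) (e 1)
    simpa [hf, hDφdef] using this.trans hD
  have hDφne : Dφ ≠ 0 := by intro h; rw [h] at hDφ; norm_num at hDφ
  have hli : LinearIndependent ℝ f := by
    rw [hf, LinearIndependent.pair_iff]
    intro s t hst
    have h1 : o.areaForm (s • φ (e 0) + t • φ (e 1)) (φ (e 1)) = 0 := by rw [hst]; simp
    have h2 : o.areaForm (φ (e 0)) (s • φ (e 0) + t • φ (e 1)) = 0 := by rw [hst]; simp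
    simp only [map_add, map_smul, LinearMap.add_apply, LinearMap.smul_apply, smul_eq_mul,
      halt] at h1 h2
    have hD0 : o.areaForm (φ (e 0)) (φ (e 1)) = Dφ := by rw [hDφdef]; simp [hf]
    rw [hD0] at h1 h2
    constructor
    · have : s * Dφ = 0 := by linarith
      rcases mul_eq_zero.mp this with h | h
      · exact h
      · exact absurd h hDφne
    · have : t * Dφ = 0 := by linarith
      rcases mul_eq_zero.mp this with h | h
      · exact h
      · exact absurd h hDφne
  set fB : Module.Basis (Fin 2) ℝ E :=
    basisOfLinearIndependentOfCardEqFinrank hli (by simp [hdim]) with hfB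
  have hcoe : ⇑fB = f := coe_basisOfLinearIndependentOfCardEqFinrank hli _
  have hE : ∀ x y : E, o.areaForm x y =
      (e.repr x 0 * e.repr y 1 - e.repr x 1 * e.repr y 0) * D :=
    fun x y => expand2' o.areaForm halt e x y
  have hF : ∀ x y : E, o.areaForm x y =
      (fB.repr x 0 * fB.repr y 1 - fB.repr x 1 * fB.repr y 0) * Dφ := by
    intro x y
    have := expand2' o.areaForm halt fB x y
    rwa [show fB 0 = f 0 from congrFun hcoe 0, show fB 1 = f 1 from congrFun hcoe 1] at this
  -- coordinates of φ (e i) in fB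
  have hrepr0 : fB.repr (φ (e 0)) = Finsupp.single 0 1 := by
    rw [show φ (e 0) = fB 0 by rw [hcoe]; simp [hf]]; exact fB.repr_self 0
  have hrepr1 : fB.repr (φ (e 1)) = Finsupp.single 1 1 := by
    rw [show φ (e 1) = fB 1 by rw [hcoe]; simp [hf]]; exact fB.repr_self 1
  have hQ : ∀ x : E, |fB.repr (φ x) 1| = |e.repr x 1| := by
    intro x
    have h := hK x (e 0)
    rw [hF (φ x) (φ (e 0)), hE x (e 0)] at h
    simp only [hrepr0, Finsupp.single_apply, Module.Basis.repr_self] at h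
    norm_num at h
    rw [hD, hDφ] at h
    simpa using h
  have hP : ∀ x : E, |fB.repr (φ x) 0| = |e.repr x 0| := by
    intro x
    have h := hK x (e 1)
    rw [hF (φ x) (φ (e 1)), hE x (e 1)] at h
    simp only [hrepr1, Finsupp.single_apply, Module.Basis.repr_self] at h
    norm_num at h
    rw [hD, hDφ] at h
    simpa using h
  -- the test vector w
  set w : E := e 0 + (2:ℝ) • e 1 with hwdef
  have hw0 : e.repr w 0 = 1 := by simp [hwdef, Module.Basis.repr_self]
  have hw1 : e.repr w 1 = 2 := by simp [hwdef, Module.Basis.repr_self]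
  set W0 : ℝ := fB.repr (φ w) 0 with hW0def
  set W1 : ℝ := fB.repr (φ w) 1 with hW1def
  have hW0 : |W0| = 1 := by rw [hW0def, hP w, hw0, abs_one]
  have hW1 : |W1| = 2 := by rw [hW1def, hQ w, hw1]; norm_num
  have hW0sq : W0 * W0 = 1 := by
    have := abs_mul_abs_self W0; rw [hW0] at this; linarith
  have hW1sq : W1 * W1 = 4 := by
    have := abs_mul_abs_self W1; rw [hW1] at this; linarith
  set c : ℝ := W0 * W1 / 2 with hcdef
  have hc2 : c * c = 1 := by rw [hcdef]; linear_combination (W1 * W1 / 4) * hW0sq + (1 / 4) * hW1sq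
  have hc : c = 1 ∨ c = -1 := mul_self_eq_one_iff.mp hc2
  have hcabs : |c| = 1 := by rcases hc with h | h <;> rw [h] <;> norm_num
  -- the key sign claim
  have key : ∀ x : E,
      (fB.repr (φ x) 0 = e.repr x 0 ∧ fB.repr (φ x) 1 = c * e.repr x 1) ∨
      (fB.repr (φ x) 0 = -(e.repr x 0) ∧ fB.repr (φ x) 1 = -(c * e.repr x 1)) := by
    intro x
    set P : ℝ := fB.repr (φ x) 0 with hPdef
    set Q : ℝ := fB.repr (φ x) 1 with hQdef
    set px : ℝ := e.repr x 0 with hpxdef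
    set qx : ℝ := e.repr x 1 with hqxdef
    have hPx : P = px ∨ P = -px := abs_eq_abs.mp (hP x)
    have hQx : Q = qx ∨ Q = -qx := abs_eq_abs.mp (hQ x)
    by_cases hp : px = 0
    · have hP0 : P = 0 := by rcases hPx with h | h <;> rw [h, hp] <;> ring
      rcases hQx with h | h
      · rcases hc with h1 | h1
        · left; exact ⟨by rw [hP0, hp], by rw [h, h1, one_mul]⟩
        · right; exact ⟨by rw [hP0, hp]; ring, by rw [h, h1]; ring⟩
      · rcases hc with h1 | h1
        · right; exact ⟨by rw [hP0, hp]; ring, by rw [h, h1]; ring⟩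
        · left; exact ⟨by rw [hP0, hp], by rw [h, h1]; ring⟩
    · by_cases hq : qx = 0
      · have hQ0 : Q = 0 := by rcases hQx with h | h <;> rw [h, hq] <;> ring
        rcases hPx with h | h
        · left; exact ⟨h, by rw [hQ0, hq]; ring⟩
        · right; exact ⟨h, by rw [hQ0, hq]; ring⟩
      · -- generic case: use the test vector w
        have hkeyw := hK x w
        rw [hF (φ x) (φ w), hE x w] at hkeyw
        rw [← hPdef, ← hQdef, ← hW0def, ← hW1def, ← hpxdef, ← hqxdef, hw0, hw1] at hkeyw
        rw [abs_mul, abs_mul, hD, hDφ, mul_one, mul_one] at hkeyw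
        have hPP : P * P = px * px := by rcases hPx with h | h <;> rw [h] <;> ring
        have hQQ : Q * Q = qx * qx := by rcases hQx with h | h <;> rw [h] <;> ring
        have hsq : (P * W1 - Q * W0) ^ 2 = (px * 2 - qx * 1) ^ 2 := by
          rw [← sq_abs (P * W1 - Q * W0), hkeyw, sq_abs]
        have h7 : P * Q * (W0 * W1) = 2 * (px * qx) := by
          linear_combination (-1/2) * hsq + (W1 * W1 / 2) * hPP + (px * px / 2) * hW1sq + (W0 * W0 / 2) * hQQ + (qx * qx / 2) * hW0sq
        have h7' : 2 * c * (P * Q) = 2 * (px * qx) := by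
          rw [hcdef]; linear_combination h7
        have h8 : P * Q = c * (px * qx) := by
          linear_combination (c / 2) * h7' - (P * Q) * hc2
        rcases hPx with h | h
        · left
          refine ⟨h, ?_⟩
          have : px * Q = px * (c * qx) := by linear_combination h8 - Q * h
          exact mul_left_cancel₀ hp this
        · right
          refine ⟨h, ?_⟩
          have : px * Q = px * (-(c * qx)) := by linear_combination -h8 + Q * h
          exact mul_left_cancel₀ hp this
  -- the linear map A
  set A : E →ₗ[ℝ] E := e.constr ℝ ![f 0, c • f 1] with hAdef
  have hA0 : A (e 0) = f 0 := by rw [hAdef, Module.Basis.constr_basis]; simp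
  have hA1 : A (e 1) = c • f 1 := by rw [hAdef, Module.Basis.constr_basis]; simp
  have hAx : ∀ x : E, A x = e.repr x 0 • f 0 + (c * e.repr x 1) • f 1 := by
    intro x
    have hx : (e.repr x 0) • e 0 + (e.repr x 1) • e 1 = x := by
      have := e.sum_repr x; rwa [Fin.sum_univ_two] at this
    conv_lhs => rw [← hx]
    rw [map_add, map_smul, map_smul, hA0, hA1, smul_smul, mul_comm]
  have hφx : ∀ x : E, φ x = fB.repr (φ x) 0 • f 0 + fB.repr (φ x) 1 • f 1 := by
    intro x
    have := fB.sum_repr (φ x)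
    rw [Fin.sum_univ_two] at this
    rw [show fB 0 = f 0 from congrFun hcoe 0, show fB 1 = f 1 from congrFun hcoe 1] at this
    exact this.symm
  have main : ∀ x : E, ∃ s : ℝ, (s = 1 ∨ s = -1) ∧ φ x = s • A x := by
    intro x
    rcases key x with ⟨h1, h2⟩ | ⟨h1, h2⟩
    · exact ⟨1, Or.inl rfl, by rw [hφx x, hAx x, h1, h2, one_smul]⟩
    · refine ⟨-1, Or.inr rfl, ?_⟩
      rw [hφx x, hAx x, h1, h2]
      simp [neg_smul, smul_add]
  -- determinant
  have hdet : ∀ u v : E, o.areaForm (A u) (A v) = LinearMap.det A * o.areaForm u v := by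
    intro u v
    rw [o.areaForm_to_volumeForm, o.areaForm_to_volumeForm]
    have h2 : ![A u, A v] = A ∘ ![u, v] := by
      funext i; fin_cases i <;> simp
    rw [h2, AlternatingMap.eq_smul_basis_det e o.volumeForm]
    simp only [AlternatingMap.smul_apply, Module.Basis.det_comp, smul_eq_mul]
    ring
  have h9 := hdet (e 0) (e 1)
  rw [hA0, hA1, map_smul] at h9
  have h10 : c * Dφ = LinearMap.det A * D := by
    rw [hDdef, hDφdef]
    simpa using h9
  have h11 : |LinearMap.det A| = 1 := by
    have := congrArg abs h10
    rw [abs_mul, abs_mul, hcabs, hDφ, hD, one_mul, mul_one] at this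
    exact this.symm
  choose ε hε1 hε2 using main
  exact ⟨ε, A, hε1, h11, hε2⟩
end

section
/- Let E be an infinite-dimensional real Hilbert space (not necessarily separable) and let φ : E → E be a bijection such that Area(φ(a), φ(b)) = Area(a, b) for all a, b ∈ E. Then there exist a function ε : E → {−1, 1} and a linear, surjective isometry R : E → E such that φ(a) = ε(a) · (R a) for every a ∈ E. -/
namespace Stmt2Aux

variable {E : Type*} [NormedAddCommGroup E] [InnerProductSpace ℝ E]

/-- Squared area of parallelogram. -/
noncomputable def S (a b : E) : ℝ := ‖a‖^2 * ‖b‖^2 - (inner ℝ a b : ℝ)^2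

lemma S_nonneg (a b : E) : 0 ≤ S a b := by
  have h := abs_real_inner_le_norm a b
  have h2 : (inner ℝ a b : ℝ)^2 ≤ (‖a‖*‖b‖)^2 := by
    have := abs_nonneg (inner ℝ a b : ℝ)
    nlinarith [sq_abs (inner ℝ a b : ℝ)]
  unfold S; nlinarith

lemma S_symm (a b : E) : S a b = S b a := by
  unfold S; rw [real_inner_comm]; ring

lemma S_smul_left (t : ℝ) (a b : E) : S (t • a) b = t^2 * S a b := by
  unfold S
  rw [norm_smul, real_inner_smul_left]
  simp [mul_pow]; ring

lemma S_smul_right (t : ℝ) (a b : E) : S a (t • b) = t^2 * S a b := by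
  rw [S_symm, S_smul_left, S_symm]

lemma S_shear (a b : E) (t : ℝ) : S (a + t • b) b = S a b := by
  unfold S
  rw [norm_add_sq_real, inner_add_left, real_inner_smul_left, real_inner_smul_right,
    norm_smul, real_inner_self_eq_norm_sq]
  simp only [Real.norm_eq_abs, mul_pow, sq_abs]
  ring

lemma S_self (a : E) : S a a = 0 := by
  unfold S; rw [real_inner_self_eq_norm_sq]; ring

lemma S_zero_right (a : E) : S a 0 = 0 := by unfold S; simp

lemma S_zero_left (a : E) : S 0 a = 0 := by unfold S; simp

/-- Cauchy–Schwarz equality: dependence. -/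
lemma dep_of_S_eq_zero {a b : E} (h : S a b = 0) (ha : a ≠ 0) : ∃ t : ℝ, b = t • a := by
  set t : ℝ := (inner ℝ a b : ℝ) / ‖a‖^2 with ht
  refine ⟨t, ?_⟩
  have hna : ‖a‖ ≠ 0 := norm_ne_zero_iff.mpr ha
  have h1 : ‖b - t • a‖^2 * ‖a‖^2 = 0 := by
    rw [norm_sub_sq_real, real_inner_smul_right, norm_smul]
    unfold S at h
    have hc : (inner ℝ b a : ℝ) = inner ℝ a b := real_inner_comm a b
    have hn : (‖t‖:ℝ)^2 = t^2 := sq_abs t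
    rw [hc]
    have expand : (‖b‖ ^ 2 - 2 * (t * (inner ℝ a b:ℝ)) + (‖t‖ * ‖a‖) ^ 2) * ‖a‖ ^ 2
        = ‖b‖^2*‖a‖^2 - 2*t*(inner ℝ a b:ℝ)*‖a‖^2 + t^2*‖a‖^2*‖a‖^2 := by
      rw [mul_pow, hn]; ring
    rw [expand, ht]
    field_simp
    nlinarith [h]
  have h2 : ‖b - t • a‖^2 = 0 := by
    have : (‖a‖:ℝ)^2 ≠ 0 := pow_ne_zero _ hna
    exact (mul_eq_zero.mp h1).resolve_right this
  have : b - t • a = 0 := by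
    have := pow_eq_zero_iff (n := 2) (by norm_num) |>.mp h2
    exact norm_eq_zero.mp this
  rw [sub_eq_zero] at this
  exact this

lemma S_eq_zero_of_dep (a : E) (t : ℝ) : S a (t • a) = 0 := by
  rw [S_smul_right, S_self, mul_zero]

lemma S_ne_zero_add {a c : E} (h : S a c ≠ 0) : a + c ≠ 0 := by
  intro hac
  apply h
  have : c = (-1 : ℝ) • a := by
    rw [neg_one_smul, eq_neg_iff_add_eq_zero, add_comm]; exact hac
  rw [this, S_eq_zero_of_dep]


section
variable {E : Type*} [NormedAddCommGroup E] [InnerProductSpace ℝ E]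


lemma not_findim_of_span_top (hdim : ¬ FiniteDimensional ℝ E) (s : Set E) (hs : s.Finite)
    (h : Submodule.span ℝ s = ⊤) : False := by
  apply hdim
  haveI := FiniteDimensional.span_of_finite ℝ hs
  exact Module.Finite.of_surjective (Submodule.span ℝ s).subtype
    (fun x => ⟨⟨x, h ▸ Submodule.mem_top⟩, rfl⟩)

lemma exists_S_ne_zero [CompleteSpace E] (hdim : ¬ FiniteDimensional ℝ E) {z : E} (hz : z ≠ 0) :
    ∃ w : E, S z w ≠ 0 := by
  have hne : Submodule.span ℝ ({z} : Set E) ≠ ⊤ := by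
    intro h
    exact not_findim_of_span_top hdim {z} (Set.finite_singleton z) h
  have : ∃ w, w ∉ Submodule.span ℝ ({z} : Set E) := by
    by_contra h
    push_neg at h
    exact hne (Submodule.eq_top_iff'.mpr h)
  obtain ⟨w, hw⟩ := this
  refine ⟨w, fun hS => hw ?_⟩
  obtain ⟨t, ht⟩ := dep_of_S_eq_zero hS hz
  rw [ht]
  exact Submodule.mem_span_singleton.mpr ⟨t, rfl⟩

lemma exists_orth [CompleteSpace E] (hdim : ¬ FiniteDimensional ℝ E) (s : Set E) (hs : s.Finite) :
    ∃ e : E, e ≠ 0 ∧ ∀ v ∈ s, (inner ℝ v e : ℝ) = 0 := by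
  set U := Submodule.span ℝ (s : Set E) with hU
  haveI : FiniteDimensional ℝ U := FiniteDimensional.span_of_finite ℝ hs
  have hne : U ≠ ⊤ := fun h => not_findim_of_span_top hdim _ hs h
  have hbot : Uᗮ ≠ ⊥ := fun h => hne (Submodule.orthogonal_eq_bot_iff.mp h)
  obtain ⟨e, heU, he0⟩ := (Submodule.ne_bot_iff _).mp hbot
  exact ⟨e, he0, fun v hv => (Submodule.mem_orthogonal U e).mp heU v
    (Submodule.subset_span hv)⟩


variable {φ : E → E}


lemma phi_zero [CompleteSpace E] (hdim : ¬ FiniteDimensional ℝ E)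
    (hsurj : Function.Surjective φ)
    (hS : ∀ a b : E, S (φ a) (φ b) = S a b) : φ 0 = 0 := by
  by_contra h0
  obtain ⟨w, hw⟩ := exists_S_ne_zero hdim h0
  obtain ⟨b, rfl⟩ := hsurj w
  rw [hS] at hw
  exact hw (S_zero_left b)

-- algebraic identity in the domain
lemma S_parallelogram (a b d : E) :
    S (a+b) d + S (a-b) d = 2 * S a d + 2 * S b d := by
  unfold S
  rw [norm_add_sq_real, norm_sub_sq_real, inner_add_left, inner_sub_left]
  ring

section Phi
variable {φ : E → E} [CompleteSpace E]
  (hdim : ¬ FiniteDimensional ℝ E)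
  (hsurj : Function.Surjective φ)
  (hS : ∀ a b : E, S (φ a) (φ b) = S a b)

include hsurj hS

lemma key_e (a b : E) (e : E) :
    S (φ (a+b)) e + S (φ (a-b)) e = 2 * S (φ a) e + 2 * S (φ b) e := by
  obtain ⟨d, rfl⟩ := hsurj e
  rw [hS, hS, hS, hS]
  exact S_parallelogram a b d

include hdim

lemma par_m (a b : E) :
    ‖φ (a+b)‖^2 + ‖φ (a-b)‖^2 = 2*‖φ a‖^2 + 2*‖φ b‖^2 := by
  obtain ⟨e, he0, he⟩ := exists_orth hdim {φ (a+b), φ (a-b), φ a, φ b}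
    ((Set.finite_singleton _).insert _ |>.insert _ |>.insert _)
  have h1 := key_e hsurj hS a b e
  have o1 : (inner ℝ (φ (a+b)) e : ℝ) = 0 := he _ (by simp)
  have o2 : (inner ℝ (φ (a-b)) e : ℝ) = 0 := he _ (by simp)
  have o3 : (inner ℝ (φ a) e : ℝ) = 0 := he _ (by simp)
  have o4 : (inner ℝ (φ b) e : ℝ) = 0 := he _ (by simp)
  unfold S at h1
  rw [o1, o2, o3, o4] at h1
  have he2 : (0:ℝ) < ‖e‖^2 := pow_pos (norm_pos_iff.mpr he0) 2
  have : (‖φ (a+b)‖^2 + ‖φ (a-b)‖^2 - (2*‖φ a‖^2 + 2*‖φ b‖^2)) * ‖e‖^2 = 0 := by ring_nf; ring_nf at h1; linarith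
  have := (mul_eq_zero.mp this).resolve_right (by nlinarith)
  linarith

/-- quasi-additivity -/
lemma qadd (a b : E) (hab : S a b ≠ 0) :
    ∃ x y : ℝ, (x = 1 ∨ x = -1) ∧ (y = 1 ∨ y = -1) ∧ φ (a+b) = x • φ a + y • φ b := by
  have hSab' : S (φ a) (φ b) ≠ 0 := by rw [hS]; exact hab
  -- span membership
  set U := Submodule.span ℝ ({φ a, φ b} : Set E) with hU
  haveI : FiniteDimensional ℝ U := FiniteDimensional.span_of_finite ℝ
    ((Set.finite_singleton (φ b)).insert _)
  have hmem : φ (a+b) ∈ U := by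
    rw [← Submodule.orthogonal_orthogonal U]
    rw [Submodule.mem_orthogonal]
    intro e heU
    have o3 : (inner ℝ (φ a) e : ℝ) = 0 :=
      (Submodule.mem_orthogonal U e).mp heU _ (Submodule.subset_span (by simp))
    have o4 : (inner ℝ (φ b) e : ℝ) = 0 :=
      (Submodule.mem_orthogonal U e).mp heU _ (Submodule.subset_span (by simp))
    have h1 := key_e hsurj hS a b e
    have hm := par_m hdim hsurj hS a b
    unfold S at h1
    rw [o3, o4] at h1
    have hsq : (inner ℝ (φ (a+b)) e : ℝ)^2 + (inner ℝ (φ (a-b)) e : ℝ)^2 = 0 := by nlinarith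
    have : (inner ℝ (φ (a+b)) e : ℝ) = 0 := by nlinarith [sq_nonneg (inner ℝ (φ (a+b)) e : ℝ), sq_nonneg (inner ℝ (φ (a-b)) e : ℝ)]
    rw [real_inner_comm]; exact this
  obtain ⟨x, y, hxy⟩ := Submodule.mem_span_pair.mp hmem
  refine ⟨x, y, ?_, ?_, hxy.symm⟩
  · -- x = ±1
    have h1 : S (φ (a+b)) (φ b) = S a b := by
      rw [hS]
      have : a + b = a + (1:ℝ) • b := by simp
      rw [this, S_shear]
    rw [← hxy] at h1
    have h2 : S (x • φ a + y • φ b) (φ b) = x^2 * S (φ a) (φ b) := by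
      rw [S_shear, S_smul_left]
    rw [h2, hS] at h1
    have hx2 : x^2 = 1 := by
      have : x^2 * S a b = 1 * S a b := by linarith
      exact mul_right_cancel₀ hab this
    have : (x-1)*(x+1) = 0 := by nlinarith
    rcases mul_eq_zero.mp this with h | h
    · left; linarith
    · right; linarith
  · have h1 : S (φ (a+b)) (φ a) = S a b := by
      rw [hS]
      have : a + b = b + (1:ℝ) • a := by rw [one_smul, add_comm]
      rw [this, S_shear, S_symm]
    rw [← hxy] at h1
    have h2 : S (x • φ a + y • φ b) (φ a) = y^2 * S (φ b) (φ a) := by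
      rw [add_comm (x • φ a), S_shear, S_smul_left]
    rw [h2, S_symm, hS] at h1
    have hy2 : y^2 = 1 := by
      have : y^2 * S a b = 1 * S a b := by linarith
      exact mul_right_cancel₀ hab this
    have : (y-1)*(y+1) = 0 := by nlinarith
    rcases mul_eq_zero.mp this with h | h
    · left; linarith
    · right; linarith

end Phi

lemma norm_smul_add_sq (x y : ℝ) (u v : E) :
    ‖x • u + y • v‖^2 = x^2*‖u‖^2 + 2*x*y*(inner ℝ u v : ℝ) + y^2*‖v‖^2 := by
  rw [norm_add_sq_real, real_inner_smul_left, real_inner_smul_right, norm_smul, norm_smul]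
  simp only [Real.norm_eq_abs, mul_pow, sq_abs]
  ring

section Phi2
variable {φ : E → E} [CompleteSpace E]
  (hdim : ¬ FiniteDimensional ℝ E)
  (hsurj : Function.Surjective φ)
  (hS : ∀ a b : E, S (φ a) (φ b) = S a b)

/-- polarization of `v ↦ ‖φ v‖²`. -/
noncomputable def Bf (φ : E → E) (a b : E) : ℝ := (‖φ (a+b)‖^2 - ‖φ a‖^2 - ‖φ b‖^2)/2

lemma Bf_symm (a b : E) : Bf φ a b = Bf φ b a := by unfold Bf; rw [add_comm]; ring

include hdim hsurj hS

lemma m3 (a b c : E) :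
    ‖φ (a+b+c)‖^2 = ‖φ (a+b)‖^2 + ‖φ (a+c)‖^2 + ‖φ (b+c)‖^2
      - ‖φ a‖^2 - ‖φ b‖^2 - ‖φ c‖^2 := by
  have h₁ := par_m hdim hsurj hS (a+b) c
  have h₂ := par_m hdim hsurj hS (a+c) b
  have h₃ := par_m hdim hsurj hS a (b-c)
  have h₄ := par_m hdim hsurj hS b c
  have e1 : a + c + b = a + b + c := by abel
  have e2 : a + c - b = a - b + c := by abel
  have e3 : a + (b - c) = a + b - c := by abel
  have e4 : a - (b - c) = a - b + c := by abel
  rw [e1, e2] at h₂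
  rw [e3, e4] at h₃
  linarith

lemma Bf_add (a b c : E) : Bf φ a (b+c) = Bf φ a b + Bf φ a c := by
  have h := m3 hdim hsurj hS a b c
  unfold Bf
  have e : a + (b + c) = a + b + c := by abel
  rw [e]
  linarith

lemma Bf_sq (a b : E) (hab : S a b ≠ 0) :
    (Bf φ a b)^2 = ‖φ a‖^2 * ‖φ b‖^2 - S a b := by
  obtain ⟨x, y, hx, hy, hphi⟩ := qadd hdim hsurj hS a b hab
  have hx2 : x^2 = 1 := by rcases hx with rfl | rfl <;> norm_num
  have hy2 : y^2 = 1 := by rcases hy with rfl | rfl <;> norm_num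
  have hm : ‖φ (a+b)‖^2 = ‖φ a‖^2 + 2*x*y*(inner ℝ (φ a) (φ b) : ℝ) + ‖φ b‖^2 := by
    rw [hphi, norm_smul_add_sq, hx2, hy2]; ring
  have hB : Bf φ a b = x*y*(inner ℝ (φ a) (φ b) : ℝ) := by unfold Bf; rw [hm]; ring
  have hSab := hS a b
  unfold S at hSab
  rw [hB]
  have : (x*y)^2 = 1 := by rw [mul_pow, hx2, hy2]; norm_num
  unfold S
  nlinarith [this, hSab]

/-- Norm preservation. -/
lemma m_eq (hinj : Function.Injective φ) (v : E) : ‖φ v‖^2 = ‖v‖^2 := by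
  rcases eq_or_ne v 0 with rfl | hv
  · rw [phi_zero hdim hsurj hS]
  · obtain ⟨e₂, he₂0, he₂⟩ := exists_orth hdim {v} (Set.finite_singleton v)
    obtain ⟨e₃, he₃0, he₃⟩ := exists_orth hdim {v, e₂}
      ((Set.finite_singleton e₂).insert v)
    have o12 : (inner ℝ v e₂ : ℝ) = 0 := he₂ v (by simp)
    have o13 : (inner ℝ v e₃ : ℝ) = 0 := he₃ v (by simp)
    have o23 : (inner ℝ e₂ e₃ : ℝ) = 0 := he₃ e₂ (by simp)
    -- the pivot identity
    have key : ∀ u w w' : E, u ≠ 0 → w ≠ 0 → w' ≠ 0 →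
        (inner ℝ u w : ℝ) = 0 → (inner ℝ u w' : ℝ) = 0 → (inner ℝ w w' : ℝ) = 0 →
        Bf φ u w * Bf φ u w' = ‖φ u‖^2 * Bf φ w w' := by
      intro u w w' hu hw hw' ouw ouw' oww'
      have hnu : (0:ℝ) < ‖u‖^2 := pow_pos (norm_pos_iff.mpr hu) 2
      have hnw : (0:ℝ) < ‖w‖^2 := pow_pos (norm_pos_iff.mpr hw) 2
      have hnw' : (0:ℝ) < ‖w'‖^2 := pow_pos (norm_pos_iff.mpr hw') 2
      have Suw : S u w = ‖u‖^2*‖w‖^2 := by unfold S; rw [ouw]; ring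
      have Suw' : S u w' = ‖u‖^2*‖w'‖^2 := by unfold S; rw [ouw']; ring
      have hg0 : w + w' ≠ 0 := by
        intro h
        have : w' = -w := by linear_combination (norm := abel) h
        rw [this, inner_neg_right] at oww'
        have : (inner ℝ w w : ℝ) = 0 := by linarith
        exact hw (inner_self_eq_zero.mp this)
      have oug : (inner ℝ u (w+w') : ℝ) = 0 := by rw [inner_add_right, ouw, ouw']; ring
      have hgn : ‖w + w'‖^2 = ‖w‖^2 + ‖w'‖^2 := by rw [norm_add_sq_real, oww']; ring
      have Sug : S u (w+w') = ‖u‖^2*(‖w‖^2 + ‖w'‖^2) := by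
        unfold S; rw [oug, hgn]; ring
      have h1 : (Bf φ u w)^2 = ‖φ u‖^2*‖φ w‖^2 - ‖u‖^2*‖w‖^2 := by
        rw [Bf_sq hdim hsurj hS u w (by rw [Suw]; exact ne_of_gt (mul_pos hnu hnw)), Suw]
      have h2 : (Bf φ u w')^2 = ‖φ u‖^2*‖φ w'‖^2 - ‖u‖^2*‖w'‖^2 := by
        rw [Bf_sq hdim hsurj hS u w' (by rw [Suw']; exact ne_of_gt (mul_pos hnu hnw')), Suw']
      have h3 : (Bf φ u w + Bf φ u w')^2
          = ‖φ u‖^2*‖φ (w+w')‖^2 - ‖u‖^2*(‖w‖^2 + ‖w'‖^2) := by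
        rw [← Bf_add hdim hsurj hS u w w',
          Bf_sq hdim hsurj hS u (w+w') (by rw [Sug]; exact ne_of_gt (mul_pos hnu (add_pos hnw hnw'))), Sug]
      have hmg : ‖φ (w+w')‖^2 = ‖φ w‖^2 + ‖φ w'‖^2 + 2 * Bf φ w w' := by
        unfold Bf; ring
      rw [hmg] at h3
      nlinarith [h1, h2, h3]
    have hmv : (0:ℝ) < ‖φ v‖^2 := by
      have : φ v ≠ 0 := by
        intro h
        exact hv (hinj (h.trans (phi_zero hdim hsurj hS).symm))
      exact pow_pos (norm_pos_iff.mpr this) 2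
    have hm2 : (0:ℝ) < ‖φ e₂‖^2 := by
      have : φ e₂ ≠ 0 := by
        intro h
        exact he₂0 (hinj (h.trans (phi_zero hdim hsurj hS).symm))
      exact pow_pos (norm_pos_iff.mpr this) 2
    have hm3 : (0:ℝ) < ‖φ e₃‖^2 := by
      have : φ e₃ ≠ 0 := by
        intro h
        exact he₃0 (hinj (h.trans (phi_zero hdim hsurj hS).symm))
      exact pow_pos (norm_pos_iff.mpr this) 2
    set P12 := Bf φ v e₂ with hP12
    set P13 := Bf φ v e₃ with hP13
    set P23 := Bf φ e₂ e₃ with hP23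
    set t1 := ‖φ v‖^2
    set t2 := ‖φ e₂‖^2
    set t3 := ‖φ e₃‖^2
    have k1 : P12 * P13 = t1 * P23 := key v e₂ e₃ hv he₂0 he₃0 o12 o13 o23
    have k2 : P12 * P23 = t2 * P13 := by
      have := key e₂ v e₃ he₂0 hv he₃0
        (by rw [real_inner_comm]; exact o12) o23 o13
      rw [Bf_symm e₂ v] at this
      exact this
    have k3 : P13 * P23 = t3 * P12 := by
      have := key e₃ v e₂ he₃0 hv he₂0
        (by rw [real_inner_comm]; exact o13)
        (by rw [real_inner_comm]; exact o23) o12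
      rw [Bf_symm e₃ v, Bf_symm e₃ e₂] at this
      exact this
    have hnv : (0:ℝ) < ‖v‖^2 := pow_pos (norm_pos_iff.mpr hv) 2
    have hn2 : (0:ℝ) < ‖e₂‖^2 := pow_pos (norm_pos_iff.mpr he₂0) 2
    have hn3 : (0:ℝ) < ‖e₃‖^2 := pow_pos (norm_pos_iff.mpr he₃0) 2
    have sq12 : P12^2 = t1*t2 - ‖v‖^2*‖e₂‖^2 := by
      have hS12 : S v e₂ = ‖v‖^2*‖e₂‖^2 := by unfold S; rw [o12]; ring
      rw [hP12, Bf_sq hdim hsurj hS v e₂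
        (by rw [hS12]; exact ne_of_gt (mul_pos hnv hn2)), hS12]
    have sq13 : P13^2 = t1*t3 - ‖v‖^2*‖e₃‖^2 := by
      have hS13 : S v e₃ = ‖v‖^2*‖e₃‖^2 := by unfold S; rw [o13]; ring
      rw [hP13, Bf_sq hdim hsurj hS v e₃
        (by rw [hS13]; exact ne_of_gt (mul_pos hnv hn3)), hS13]
    have sq23 : P23^2 = t2*t3 - ‖e₂‖^2*‖e₃‖^2 := by
      have hS23 : S e₂ e₃ = ‖e₂‖^2*‖e₃‖^2 := by unfold S; rw [o23]; ring
      rw [hP23, Bf_sq hdim hsurj hS e₂ e₃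
        (by rw [hS23]; exact ne_of_gt (mul_pos hn2 hn3)), hS23]
    have hz : (P12^2 - t1*t2) * (P13*P23) = 0 := by
      linear_combination (P12*P23)*k1 + (t1*P23)*k2
    have h1323 : P13*P23 = 0 := by
      have hne : P12^2 - t1*t2 ≠ 0 := by
        rw [sq12]; intro h; nlinarith
      exact (mul_eq_zero.mp hz).resolve_left hne
    have hP12z : P12 = 0 := by
      rw [h1323] at k3
      have := k3.symm
      rcases mul_eq_zero.mp this with h | h
      · linarith
      · exact h
    have hP13z : P13 = 0 := by
      rw [hP12z, zero_mul] at k2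
      rcases mul_eq_zero.mp k2.symm with h | h
      · linarith
      · exact h
    have hP23z : P23 = 0 := by
      rw [hP12z, zero_mul] at k1
      rcases mul_eq_zero.mp k1.symm with h | h
      · linarith
      · exact h
    rw [hP12z] at sq12; rw [hP13z] at sq13; rw [hP23z] at sq23
    have eq12 : t1*t2 = ‖v‖^2*‖e₂‖^2 := by linarith [sq12]
    have eq13 : t1*t3 = ‖v‖^2*‖e₃‖^2 := by linarith [sq13]
    have eq23 : t2*t3 = ‖e₂‖^2*‖e₃‖^2 := by linarith [sq23]
    have h23 : t2*t3 > 0 := mul_pos hm2 hm3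
    have hprod : t1^2 * (t2*t3) = (‖v‖^2)^2 * (t2*t3) := by
      calc t1^2*(t2*t3) = (t1*t2)*(t1*t3) := by ring
      _ = (‖v‖^2*‖e₂‖^2)*(‖v‖^2*‖e₃‖^2) := by rw [eq12, eq13]
      _ = (‖v‖^2)^2 * (‖e₂‖^2*‖e₃‖^2) := by ring
      _ = (‖v‖^2)^2 * (t2*t3) := by rw [eq23]
    have ht1 : t1^2 = (‖v‖^2)^2 := mul_right_cancel₀ (ne_of_gt h23) hprod
    have hfac : (t1 - ‖v‖^2)*(t1 + ‖v‖^2) = 0 := by linear_combination ht1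
    rcases mul_eq_zero.mp hfac with h | h
    · linarith
    · linarith

end Phi2

lemma sq_cases {x y : ℝ} (h : x^2 = y^2) : x = y ∨ x = -y := by
  have : (x - y)*(x + y) = 0 := by linear_combination h
  rcases mul_eq_zero.mp this with h' | h'
  · left; linarith
  · right; linarith

lemma sign_mul {x y : ℝ} (hx : x = 1 ∨ x = -1) (hy : y = 1 ∨ y = -1) :
    x*y = 1 ∨ x*y = -1 := by
  rcases hx with rfl | rfl <;> rcases hy with rfl | rfl <;> norm_num

lemma norm_add3_sq (x y z : E) (α β γ : ℝ) :
    ‖α•x + β•y + γ•z‖^2 = α^2*‖x‖^2 + β^2*‖y‖^2 + γ^2*‖z‖^2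
      + 2*α*β*(inner ℝ x y : ℝ) + 2*α*γ*(inner ℝ x z : ℝ) + 2*β*γ*(inner ℝ y z : ℝ) := by
  have h := real_inner_self_eq_norm_sq (α•x + β•y + γ•z)
  rw [← h, ← real_inner_self_eq_norm_sq x, ← real_inner_self_eq_norm_sq y,
    ← real_inner_self_eq_norm_sq z]
  simp only [inner_add_left, inner_add_right, real_inner_smul_left, real_inner_smul_right,
    real_inner_comm y x, real_inner_comm z x, real_inner_comm z y]
  ring

lemma SGN (s₁ s₂ s₃ p q r : ℝ) (h₁ : s₁ = 1 ∨ s₁ = -1) (h₂ : s₂ = 1 ∨ s₂ = -1)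
    (h₃ : s₃ = 1 ∨ s₃ = -1) (hprod : s₁*s₂*s₃ = -1)
    (heq : s₁*p + s₂*q + s₃*r = p + q + r) :
    p = 0 ∨ q = 0 ∨ r = 0 ∨ p + q + r = 0 := by
  rcases h₁ with rfl | rfl <;> rcases h₂ with rfl | rfl <;> rcases h₃ with rfl | rfl <;>
    norm_num at hprod <;>
    first
      | (left; linarith)
      | (right; left; linarith)
      | (right; right; left; linarith)
      | (right; right; right; linarith)

section Phi3
variable {φ : E → E} [CompleteSpace E]
  (hdim : ¬ FiniteDimensional ℝ E)
  (hbij : Function.Bijective φ)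
  (hS : ∀ a b : E, S (φ a) (φ b) = S a b)

include hdim hbij hS

lemma norm_phi (v : E) : ‖φ v‖^2 = ‖v‖^2 := m_eq hdim hbij.2 hS hbij.1 v

lemma hinn (a b : E) : (inner ℝ (φ a) (φ b) : ℝ)^2 = (inner ℝ a b : ℝ)^2 := by
  have h := hS a b
  unfold S at h
  rw [norm_phi hdim hbij hS a, norm_phi hdim hbij hS b] at h
  linarith

lemma hscal {c : E} (hc : c ≠ 0) (t : ℝ) :
    ∃ δ : ℝ, (δ = 1 ∨ δ = -1) ∧ φ (t • c) = (δ*t) • φ c := by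
  rcases eq_or_ne t 0 with rfl | ht
  · refine ⟨1, Or.inl rfl, ?_⟩
    simp [phi_zero hdim hbij.2 hS]
  · have hφc : φ c ≠ 0 := fun h => hc (hbij.1 (h.trans (phi_zero hdim hbij.2 hS).symm))
    have hdep : S (φ (t • c)) (φ c) = 0 := by
      rw [hS, S_symm, S_eq_zero_of_dep]
    rw [S_symm] at hdep
    obtain ⟨lam, hlam⟩ := dep_of_S_eq_zero hdep hφc
    have hnorm : lam^2 * ‖c‖^2 = t^2 * ‖c‖^2 := by
      have h1 : ‖φ (t • c)‖^2 = ‖t • c‖^2 := norm_phi hdim hbij hS _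
      rw [hlam] at h1
      rw [norm_smul, norm_smul] at h1
      simp only [Real.norm_eq_abs, mul_pow, sq_abs] at h1
      rw [norm_phi hdim hbij hS c] at h1
      linarith
    have hl2 : lam^2 = t^2 :=
      mul_right_cancel₀ (pow_ne_zero 2 (norm_ne_zero_iff.mpr hc)) hnorm
    rcases sq_cases hl2 with h | h
    · exact ⟨1, Or.inl rfl, by rw [hlam, h, one_mul]⟩
    · exact ⟨-1, Or.inr rfl, by rw [hlam, h]; ring_nf⟩

lemma dec3 {a b c : E} (hab : S a b ≠ 0) (habc : S (a+b) c ≠ 0) {t : ℝ} (ht : t ≠ 0) :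
    ∃ α β γ : ℝ, (α = 1 ∨ α = -1) ∧ (β = 1 ∨ β = -1) ∧ (γ = 1 ∨ γ = -1) ∧
      φ (a+b+t•c) = α • φ a + β • φ b + (γ*t) • φ c := by
  have hc0 : c ≠ 0 := by
    intro h; rw [h] at habc; exact habc (S_zero_right _)
  have habtc : S (a+b) (t•c) ≠ 0 := by
    rw [S_smul_right]
    exact mul_ne_zero (pow_ne_zero 2 ht) habc
  obtain ⟨x, y, hx, hy, h1⟩ := qadd hdim hbij.2 hS (a+b) (t•c) habtc
  obtain ⟨x', y', hx', hy', h2⟩ := qadd hdim hbij.2 hS a b hab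
  obtain ⟨δ, hδ, h3⟩ := hscal hdim hbij hS hc0 t
  refine ⟨x*x', x*y', y*δ, sign_mul hx hx', sign_mul hx hy', sign_mul hy hδ, ?_⟩
  rw [h1, h2, h3]
  rw [smul_add, smul_smul, smul_smul, smul_smul]
  ring_nf

/-- Triple product preservation. -/
lemma P3 {a b c : E} (hab : S a b ≠ 0) (habc : S (a+b) c ≠ 0)
    (hpab : (inner ℝ a b : ℝ) ≠ 0) (hpbc : (inner ℝ b c : ℝ) ≠ 0) (hpac : (inner ℝ a c : ℝ) ≠ 0) :
    (inner ℝ (φ a) (φ b) : ℝ) * (inner ℝ (φ b) (φ c) : ℝ) * (inner ℝ (φ a) (φ c) : ℝ)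
      = (inner ℝ a b : ℝ) * (inner ℝ b c : ℝ) * (inner ℝ a c : ℝ) := by
  set P := (inner ℝ (φ a) (φ b) : ℝ)
  set Q := (inner ℝ (φ b) (φ c) : ℝ)
  set R := (inner ℝ (φ a) (φ c) : ℝ)
  set p := (inner ℝ a b : ℝ)
  set q := (inner ℝ b c : ℝ)
  set r := (inner ℝ a c : ℝ)
  have hP : P = p ∨ P = -p := sq_cases (hinn hdim hbij hS a b)
  have hQ : Q = q ∨ Q = -q := sq_cases (hinn hdim hbij hS b c)
  have hR : R = r ∨ R = -r := sq_cases (hinn hdim hbij hS a c)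
  -- the fundamental equation for parameter t
  have main : ∀ t : ℝ, t ≠ 0 → ∃ α β γ : ℝ,
      (α = 1 ∨ α = -1) ∧ (β = 1 ∨ β = -1) ∧ (γ = 1 ∨ γ = -1) ∧
      (α*β)*P + (β*γ)*(t*Q) + (α*γ)*(t*R) = p + t*q + t*r := by
    intro t ht
    obtain ⟨α, β, γ, hα, hβ, hγ, hphi⟩ := dec3 hdim hbij hS hab habc ht
    refine ⟨α, β, γ, hα, hβ, hγ, ?_⟩
    have hα2 : α^2 = 1 := by rcases hα with rfl | rfl <;> norm_num
    have hβ2 : β^2 = 1 := by rcases hβ with rfl | rfl <;> norm_num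
    have hγ2 : γ^2 = 1 := by rcases hγ with rfl | rfl <;> norm_num
    have hnorm : ‖φ (a+b+t•c)‖^2 = ‖a+b+t•c‖^2 := norm_phi hdim hbij hS _
    have hL : ‖α • φ a + β • φ b + (γ*t) • φ c‖^2
        = ‖φ a‖^2 + ‖φ b‖^2 + t^2*‖φ c‖^2
          + 2*(α*β)*P + 2*(β*γ)*(t*Q) + 2*(α*γ)*(t*R) := by
      rw [norm_add3_sq]
      show α^2*‖φ a‖^2 + β^2*‖φ b‖^2 + (γ*t)^2*‖φ c‖^2
          + 2*α*β*P + 2*α*(γ*t)*R + 2*β*(γ*t)*Q = _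
      rw [show (γ*t)^2 = γ^2*t^2 by ring, hα2, hβ2, hγ2]
      ring
    have hR' : ‖a+b+t•c‖^2 = ‖a‖^2 + ‖b‖^2 + t^2*‖c‖^2 + 2*p + 2*(t*q) + 2*(t*r) := by
      have e1 : a+b+t•c = (1:ℝ)•a + (1:ℝ)•b + t•c := by simp
      rw [e1, norm_add3_sq]
      show (1:ℝ)^2*‖a‖^2 + (1:ℝ)^2*‖b‖^2 + t^2*‖c‖^2 + 2*1*1*p + 2*1*t*r + 2*1*t*q = _
      ring
    rw [hphi, hL, hR'] at hnorm
    rw [norm_phi hdim hbij hS a, norm_phi hdim hbij hS b, norm_phi hdim hbij hS c] at hnorm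
    linarith
  -- now case analysis
  have odd : ∀ εp εq εr : ℝ, (εp = 1 ∨ εp = -1) → (εq = 1 ∨ εq = -1) → (εr = 1 ∨ εr = -1) →
      εp*εq*εr = -1 → P = εp*p → Q = εq*q → R = εr*r → False := by
    intro εp εq εr h1 h2 h3 hprod hPp hQq hRr
    obtain ⟨α₁, β₁, γ₁, hα₁, hβ₁, hγ₁, e₁⟩ := main 1 one_ne_zero
    obtain ⟨α₂, β₂, γ₂, hα₂, hβ₂, hγ₂, e₂⟩ := main 2 two_ne_zero
    rw [hPp, hQq, hRr] at e₁ e₂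
    have hsq₁ : (α₁*β₁*γ₁)^2 = 1 := by
      rcases hα₁ with rfl|rfl <;> rcases hβ₁ with rfl|rfl <;> rcases hγ₁ with rfl|rfl <;> norm_num
    have hsq₂ : (α₂*β₂*γ₂)^2 = 1 := by
      rcases hα₂ with rfl|rfl <;> rcases hβ₂ with rfl|rfl <;> rcases hγ₂ with rfl|rfl <;> norm_num
    have d₁ := SGN (α₁*β₁*εp) (β₁*γ₁*εq) (α₁*γ₁*εr) p q r
      (sign_mul (sign_mul hα₁ hβ₁) h1) (sign_mul (sign_mul hβ₁ hγ₁) h2)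
      (sign_mul (sign_mul hα₁ hγ₁) h3)
      (by rw [show (α₁*β₁*εp)*(β₁*γ₁*εq)*(α₁*γ₁*εr) = (α₁*β₁*γ₁)^2*(εp*εq*εr) from by ring,
            hsq₁, hprod]; norm_num)
      (by linear_combination e₁)
    have d₂ := SGN (α₂*β₂*εp) (β₂*γ₂*εq) (α₂*γ₂*εr) p (2*q) (2*r)
      (sign_mul (sign_mul hα₂ hβ₂) h1) (sign_mul (sign_mul hβ₂ hγ₂) h2)
      (sign_mul (sign_mul hα₂ hγ₂) h3)
      (by rw [show (α₂*β₂*εp)*(β₂*γ₂*εq)*(α₂*γ₂*εr) = (α₂*β₂*γ₂)^2*(εp*εq*εr) from by ring,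
            hsq₂, hprod]; norm_num)
      (by linear_combination e₂)
    rcases d₁ with h | h | h | h
    · exact hpab h
    · exact hpbc h
    · exact hpac h
    · rcases d₂ with h' | h' | h' | h'
      · exact hpab h'
      · exact hpbc (by linarith)
      · exact hpac (by linarith)
      · exact hpab (by linarith)
  rcases hP with hP | hP <;> rcases hQ with hQ | hQ <;> rcases hR with hR | hR
  · rw [hP, hQ, hR]
  · exact (odd 1 1 (-1) (by norm_num) (by norm_num) (by norm_num)
      (by norm_num) (by rw [hP]; ring) (by rw [hQ]; ring) (by rw [hR]; ring)).elim
  · exact (odd 1 (-1) 1 (by norm_num) (by norm_num) (by norm_num)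
      (by norm_num) (by rw [hP]; ring) (by rw [hQ]; ring) (by rw [hR]; ring)).elim
  · rw [hP, hQ, hR]; ring
  · exact (odd (-1) 1 1 (by norm_num) (by norm_num) (by norm_num)
      (by norm_num) (by rw [hP]; ring) (by rw [hQ]; ring) (by rw [hR]; ring)).elim
  · rw [hP, hQ, hR]; ring
  · rw [hP, hQ, hR]; ring
  · exact (odd (-1) (-1) (-1) (by norm_num) (by norm_num) (by norm_num)
      (by norm_num) (by rw [hP]; ring) (by rw [hQ]; ring) (by rw [hR]; ring)).elim

end Phi3

lemma IND (L : List E) (hL : ∀ v ∈ L, v ≠ 0) :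
    ∃ w : E, ∀ v ∈ L, (inner ℝ v w : ℝ) ≠ 0 := by
  classical
  induction L with
  | nil => exact ⟨0, fun v hv => absurd hv List.not_mem_nil⟩
  | cons v₀ L ih =>
    have hv₀ : v₀ ≠ 0 := hL v₀ (by simp)
    obtain ⟨w, hw⟩ := ih (fun v hv => hL v (by simp [hv]))
    set F : Finset ℝ := ((v₀ :: L).map (fun v => -(inner ℝ v w : ℝ)/(inner ℝ v v₀ : ℝ))).toFinset
    obtain ⟨t, ht⟩ := Infinite.exists_notMem_finset F
    refine ⟨w + t • v₀, ?_⟩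
    intro v hv
    rw [inner_add_right, real_inner_smul_right]
    intro hzero
    by_cases hvv₀ : (inner ℝ v v₀ : ℝ) = 0
    · rw [hvv₀, mul_zero, add_zero] at hzero
      rcases List.mem_cons.mp hv with rfl | hv'
      · exact hv₀ (inner_self_eq_zero.mp hvv₀)
      · exact hw v hv' hzero
    · apply ht
      have : t = -(inner ℝ v w : ℝ)/(inner ℝ v v₀ : ℝ) := by
        field_simp
        linarith
      rw [this]
      simp only [F, List.mem_toFinset, List.mem_map]
      exact ⟨v, hv, rfl⟩

lemma CH [CompleteSpace E] (hdim : ¬ FiniteDimensional ℝ E)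
    (L : List E) (hL : ∀ v ∈ L, v ≠ 0) (Pr : List (E × E)) :
    ∃ d : E, (∀ v ∈ L, (inner ℝ v d : ℝ) ≠ 0) ∧
      (∀ pr ∈ Pr, d ∉ Submodule.span ℝ ({pr.1, pr.2} : Set E)) := by
  classical
  obtain ⟨w, hw⟩ := IND L hL
  set s : Set E := {x | x ∈ L ∨ x ∈ Pr.map Prod.fst ∨ x ∈ Pr.map Prod.snd ∨ x = w} with hs
  have hfin : s.Finite := by
    have : s ⊆ (L ++ Pr.map Prod.fst ++ Pr.map Prod.snd ++ [w]).toFinset := by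
      intro x hx
      simp only [Finset.mem_coe, List.mem_toFinset, List.mem_append, List.mem_singleton]
      rcases hx with h | h | h | h
      · exact Or.inl (Or.inl (Or.inl h))
      · exact Or.inl (Or.inl (Or.inr h))
      · exact Or.inl (Or.inr h)
      · exact Or.inr h
    exact Set.Finite.subset (List.toFinset _).finite_toSet this
  obtain ⟨e, he0, he⟩ := exists_orth hdim s hfin
  refine ⟨w + e, ?_, ?_⟩
  · intro v hv
    rw [inner_add_right, he v (Or.inl hv), add_zero]
    exact hw v hv
  · intro pr hpr hmem
    obtain ⟨x, y, hxy⟩ := Submodule.mem_span_pair.mp hmem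
    have h1 : (inner ℝ pr.1 e : ℝ) = 0 := he pr.1 (Or.inr (Or.inl (List.mem_map_of_mem hpr)))
    have h2 : (inner ℝ pr.2 e : ℝ) = 0 := he pr.2 (Or.inr (Or.inr (Or.inl (List.mem_map_of_mem hpr))))
    have hwe : (inner ℝ w e : ℝ) = 0 := he w (Or.inr (Or.inr (Or.inr rfl)))
    have : (inner ℝ (w + e) e : ℝ) = ‖e‖^2 := by
      rw [inner_add_left, hwe, real_inner_self_eq_norm_sq]; ring
    rw [← hxy] at this
    rw [inner_add_left, real_inner_smul_left, real_inner_smul_left, h1, h2] at this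
    have : ‖e‖^2 = 0 := by linarith
    exact he0 (norm_eq_zero.mp (by nlinarith [norm_nonneg e]))

section Phi4
variable {φ : E → E} [CompleteSpace E]
  (hdim : ¬ FiniteDimensional ℝ E)
  (hbij : Function.Bijective φ)
  (hS : ∀ a b : E, S (φ a) (φ b) = S a b)

include hdim hbij hS

lemma P3' {x c d : E} (hSxc : S x c ≠ 0) (hdsp : d ∉ Submodule.span ℝ ({x, c} : Set E))
    (hxc : (inner ℝ x c : ℝ) ≠ 0) (hcd : (inner ℝ c d : ℝ) ≠ 0) (hxd : (inner ℝ x d : ℝ) ≠ 0) :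
    (inner ℝ (φ x) (φ c) : ℝ) * (inner ℝ (φ c) (φ d) : ℝ) * (inner ℝ (φ x) (φ d) : ℝ)
      = (inner ℝ x c : ℝ) * (inner ℝ c d : ℝ) * (inner ℝ x d : ℝ) := by
  have hSxcd : S (x+c) d ≠ 0 := by
    intro h
    obtain ⟨t, rfl⟩ := dep_of_S_eq_zero h (S_ne_zero_add hSxc)
    apply hdsp
    exact Submodule.smul_mem _ t (Submodule.add_mem _
      (Submodule.subset_span (by simp)) (Submodule.subset_span (by simp)))
  exact P3 hdim hbij hS hSxc hSxcd hxc hcd hxd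

/-- transport identity -/
lemma TRsp {x c d u₀' : E} (hx : x ≠ 0) (hSxc : S x c ≠ 0)
    (hdsp : d ∉ Submodule.span ℝ ({x, c} : Set E))
    (hu : u₀' ≠ 0) (hSuc : S u₀' c ≠ 0)
    (hdsp' : d ∉ Submodule.span ℝ ({u₀', c} : Set E))
    (hxc : (inner ℝ x c : ℝ) ≠ 0) (huc : (inner ℝ u₀' c : ℝ) ≠ 0)
    (hcd : (inner ℝ c d : ℝ) ≠ 0) (hxd : (inner ℝ x d : ℝ) ≠ 0) (hud : (inner ℝ u₀' d : ℝ) ≠ 0) :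
    (inner ℝ (φ x) (φ c) : ℝ) * (inner ℝ (φ u₀') (φ c) : ℝ)
      * ((inner ℝ (φ x) (φ d) : ℝ) * (inner ℝ (φ u₀') (φ d) : ℝ))
    = (inner ℝ x c : ℝ) * (inner ℝ u₀' c : ℝ) * ((inner ℝ x d : ℝ) * (inner ℝ u₀' d : ℝ)) := by
  have T1 := P3' hdim hbij hS hSxc hdsp hxc hcd hxd
  have T2 := P3' hdim hbij hS hSuc hdsp' huc hcd hud
  have hsq : (inner ℝ (φ c) (φ d) : ℝ)^2 = (inner ℝ c d : ℝ)^2 := hinn hdim hbij hS c d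
  have hc2 : (inner ℝ c d : ℝ)^2 ≠ 0 := pow_ne_zero 2 hcd
  apply mul_right_cancel₀ hc2
  linear_combination ((inner ℝ (φ u₀') (φ c) : ℝ)*(inner ℝ (φ c) (φ d) : ℝ)*(inner ℝ (φ u₀') (φ d) : ℝ))*T1
    + ((inner ℝ x c : ℝ)*(inner ℝ c d : ℝ)*(inner ℝ x d : ℝ))*T2
    - ((inner ℝ (φ x) (φ c) : ℝ)*(inner ℝ (φ u₀') (φ c) : ℝ)*(inner ℝ (φ x) (φ d) : ℝ)*(inner ℝ (φ u₀') (φ d) : ℝ))*hsq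

end Phi4

end

end Stmt2Aux

open Stmt2Aux

/-- any bijection of an infinite-dimensional real Hilbert space
preserving the area of parallelograms is, up to signs, a linear surjective isometry. -/
theorem stmt2 {E : Type*} [NormedAddCommGroup E] [InnerProductSpace ℝ E] [CompleteSpace E]
    (hdim : ¬ FiniteDimensional ℝ E)
    (φ : E → E) (hbij : Function.Bijective φ)
    (hφ : ∀ a b : E, parArea (φ a) (φ b) = parArea a b) :
    ∃ (ε : E → ℝ) (R : E ≃ₗᵢ[ℝ] E),
      (∀ a, ε a = 1 ∨ ε a = -1) ∧
      ∀ a, φ a = ε a • R a := by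
  classical
  have hS : ∀ a b : E, S (φ a) (φ b) = S a b := by
    intro a b
    have h : Real.sqrt (S (φ a) (φ b)) = Real.sqrt (S a b) := hφ a b
    have h1 := Real.sq_sqrt (S_nonneg (φ a) (φ b))
    have h2 := Real.sq_sqrt (S_nonneg a b)
    rw [← h1, ← h2, h]
  -- a nonzero reference vector
  have hEnontriv : ∃ u₀ : E, u₀ ≠ 0 := by
    by_contra h
    push_neg at h
    apply hdim
    have : Subsingleton E := ⟨fun a b => by rw [h a, h b]⟩
    exact Module.Finite.of_surjective (0 : (Fin 1 → ℝ) →ₗ[ℝ] E)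
      (fun y => ⟨0, Subsingleton.elim _ _⟩)
  obtain ⟨u₀, hu₀⟩ := hEnontriv
  -- choice of auxiliary vectors
  have hCH : ∀ a : E, a ≠ 0 → ∃ c : E, (inner ℝ a c : ℝ) ≠ 0 ∧ (inner ℝ u₀ c : ℝ) ≠ 0 ∧
      c ∉ Submodule.span ℝ ({a, u₀} : Set E) := by
    intro a ha
    obtain ⟨d, hd1, hd2⟩ := CH hdim [a, u₀]
      (by intro v hv; rcases List.mem_cons.mp hv with rfl | hv'
          · exact ha
          · simp at hv'; rw [hv']; exact hu₀) [(a, u₀)]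
    exact ⟨d, hd1 a (by simp), hd1 u₀ (by simp), hd2 (a, u₀) (by simp)⟩
  choose cf hc1 hc2 hc3 using hCH
  set σ : E → ℝ := fun a => if h : a = 0 then 1 else
    ((inner ℝ (φ a) (φ (cf a h)) : ℝ) * (inner ℝ (φ u₀) (φ (cf a h)) : ℝ))
      / ((inner ℝ a (cf a h) : ℝ) * (inner ℝ u₀ (cf a h) : ℝ)) with hσdef
  -- sign dichotomy
  have hσpm : ∀ a : E, σ a = 1 ∨ σ a = -1 := by
    intro a
    by_cases ha : a = 0
    · left; simp [hσdef, ha]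
    · have h1 := hc1 a ha
      have h2 := hc2 a ha
      have e1 := sq_cases (hinn hdim hbij hS a (cf a ha))
      have e2 := sq_cases (hinn hdim hbij hS u₀ (cf a ha))
      have : σ a = ((inner ℝ (φ a) (φ (cf a ha)) : ℝ) * (inner ℝ (φ u₀) (φ (cf a ha)) : ℝ))
          / ((inner ℝ a (cf a ha) : ℝ) * (inner ℝ u₀ (cf a ha) : ℝ)) := by
        simp [hσdef, dif_neg ha]
      rw [this]
      rcases e1 with e1 | e1 <;> rcases e2 with e2 | e2 <;> rw [e1, e2]
      · left; field_simp
      · right; field_simp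
      · right; field_simp
      · left; field_simp
  -- key lemma
  have key : ∀ a b : E, a ≠ 0 → b ≠ 0 → (inner ℝ a b : ℝ) ≠ 0 →
      σ a * σ b * (inner ℝ (φ a) (φ b) : ℝ) = (inner ℝ a b : ℝ) := by
    intro a b ha hb hab
    have hac₁ := hc1 a ha
    have huc₁ := hc2 a ha
    have hspc₁ := hc3 a ha
    have hbc₂ := hc1 b hb
    have huc₂ := hc2 b hb
    have hspc₂ := hc3 b hb
    have hc₁0 : (cf a ha) ≠ 0 := by intro h; rw [h] at hac₁; simp at hac₁
    have hc₂0 : (cf b hb) ≠ 0 := by intro h; rw [h] at hbc₂; simp at hbc₂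
    obtain ⟨d, hdi, hdsp⟩ := CH hdim [a, b, u₀, (cf a ha), (cf b hb)]
      (by intro v hv
          simp only [List.mem_cons, List.not_mem_nil, or_false] at hv
          rcases hv with rfl | rfl | rfl | rfl | rfl
          exacts [ha, hb, hu₀, hc₁0, hc₂0])
      [(a, (cf a ha)), (u₀, (cf a ha)), (b, (cf b hb)), (u₀, (cf b hb)), (a, b), (a, (cf b hb))]
    have had : (inner ℝ a d : ℝ) ≠ 0 := hdi a (by simp)
    have hbd : (inner ℝ b d : ℝ) ≠ 0 := hdi b (by simp)
    have hud : (inner ℝ u₀ d : ℝ) ≠ 0 := hdi u₀ (by simp)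
    have hc₁d : (inner ℝ (cf a ha) d : ℝ) ≠ 0 := hdi (cf a ha) (by simp)
    have hc₂d : (inner ℝ (cf b hb) d : ℝ) ≠ 0 := hdi (cf b hb) (by simp)
    have hd1 : d ∉ Submodule.span ℝ ({a, (cf a ha)} : Set E) := hdsp (a, (cf a ha)) (by simp)
    have hd2 : d ∉ Submodule.span ℝ ({u₀, (cf a ha)} : Set E) := hdsp (u₀, (cf a ha)) (by simp)
    have hd3 : d ∉ Submodule.span ℝ ({b, (cf b hb)} : Set E) := hdsp (b, (cf b hb)) (by simp)
    have hd4 : d ∉ Submodule.span ℝ ({u₀, (cf b hb)} : Set E) := hdsp (u₀, (cf b hb)) (by simp)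
    have hd5 : d ∉ Submodule.span ℝ ({a, b} : Set E) := hdsp (a, b) (by simp)
    have hd6 : d ∉ Submodule.span ℝ ({a, (cf b hb)} : Set E) := hdsp (a, (cf b hb)) (by simp)
    -- S-nondegeneracy facts
    have hSac₁ : S a (cf a ha) ≠ 0 := by
      intro h
      obtain ⟨t, ht⟩ := dep_of_S_eq_zero h ha
      exact hspc₁ (ht ▸ Submodule.smul_mem _ t (Submodule.subset_span (by simp)))
    have hSuc₁ : S u₀ (cf a ha) ≠ 0 := by
      intro h
      obtain ⟨t, ht⟩ := dep_of_S_eq_zero h hu₀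
      exact hspc₁ (ht ▸ Submodule.smul_mem _ t (Submodule.subset_span (by simp)))
    -- nonvanishing of image inner products with d
    have hΦad : (inner ℝ (φ a) (φ d) : ℝ) ≠ 0 := by
      intro h
      have h2 := hinn hdim hbij hS a d
      rw [h] at h2
      apply had
      have h3 : (inner ℝ a d : ℝ)^2 = 0 := by rw [← h2]; norm_num
      exact pow_eq_zero_iff two_ne_zero |>.mp h3
    have hΦbd : (inner ℝ (φ b) (φ d) : ℝ) ≠ 0 := by
      intro h
      have h2 := hinn hdim hbij hS b d
      rw [h] at h2
      apply hbd
      have h3 : (inner ℝ b d : ℝ)^2 = 0 := by rw [← h2]; norm_num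
      exact pow_eq_zero_iff two_ne_zero |>.mp h3
    have hΦud : (inner ℝ (φ u₀) (φ d) : ℝ) ≠ 0 := by
      intro h
      have h2 := hinn hdim hbij hS u₀ d
      rw [h] at h2
      apply hud
      have h3 : (inner ℝ u₀ d : ℝ)^2 = 0 := by rw [← h2]; norm_num
      exact pow_eq_zero_iff two_ne_zero |>.mp h3
    have sqad : (inner ℝ (φ a) (φ d) : ℝ)^2 = (inner ℝ a d : ℝ)^2 := hinn hdim hbij hS a d
    have sqbd : (inner ℝ (φ b) (φ d) : ℝ)^2 = (inner ℝ b d : ℝ)^2 := hinn hdim hbij hS b d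
    have squd : (inner ℝ (φ u₀) (φ d) : ℝ)^2 = (inner ℝ u₀ d : ℝ)^2 := hinn hdim hbij hS u₀ d
    -- transported value of σ a
    have hstar_a := TRsp hdim hbij hS ha hSac₁ hd1 hu₀ hSuc₁ hd2 hac₁ huc₁ hc₁d had hud
    have hσa : σ a = ((inner ℝ a d : ℝ) * (inner ℝ u₀ d : ℝ))
        / ((inner ℝ (φ a) (φ d) : ℝ) * (inner ℝ (φ u₀) (φ d) : ℝ)) := by
      have : σ a = ((inner ℝ (φ a) (φ (cf a ha)) : ℝ) * (inner ℝ (φ u₀) (φ (cf a ha)) : ℝ))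
          / ((inner ℝ a (cf a ha) : ℝ) * (inner ℝ u₀ (cf a ha) : ℝ)) := by
        simp [hσdef, dif_neg ha]
      rw [this]
      field_simp
      linear_combination hstar_a
    -- case split on dependence of a, b
    by_cases hSab : S a b ≠ 0
    · have hSbc₂ : S b (cf b hb) ≠ 0 := by
        intro h
        obtain ⟨t, ht⟩ := dep_of_S_eq_zero h hb
        exact hspc₂ (ht ▸ Submodule.smul_mem _ t (Submodule.subset_span (by simp)))
      have hSuc₂ : S u₀ (cf b hb) ≠ 0 := by
        intro h
        obtain ⟨t, ht⟩ := dep_of_S_eq_zero h hu₀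
        exact hspc₂ (ht ▸ Submodule.smul_mem _ t (Submodule.subset_span (by simp)))
      have hstar_b := TRsp hdim hbij hS hb hSbc₂ hd3 hu₀ hSuc₂ hd4 hbc₂ huc₂ hc₂d hbd hud
      have hσb : σ b = ((inner ℝ b d : ℝ) * (inner ℝ u₀ d : ℝ))
          / ((inner ℝ (φ b) (φ d) : ℝ) * (inner ℝ (φ u₀) (φ d) : ℝ)) := by
        have : σ b = ((inner ℝ (φ b) (φ (cf b hb)) : ℝ) * (inner ℝ (φ u₀) (φ (cf b hb)) : ℝ))
            / ((inner ℝ b (cf b hb) : ℝ) * (inner ℝ u₀ (cf b hb) : ℝ)) := by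
          simp [hσdef, dif_neg hb]
        rw [this]
        field_simp
        linear_combination hstar_b
      have T5 := P3' hdim hbij hS hSab hd5 hab hbd had
      have ea : σ a * ((inner ℝ (φ a) (φ d) : ℝ) * (inner ℝ (φ u₀) (φ d) : ℝ))
          = (inner ℝ a d : ℝ) * (inner ℝ u₀ d : ℝ) := by
        rw [hσa]; field_simp
      have eb : σ b * ((inner ℝ (φ b) (φ d) : ℝ) * (inner ℝ (φ u₀) (φ d) : ℝ))
          = (inner ℝ b d : ℝ) * (inner ℝ u₀ d : ℝ) := by
        rw [hσb]; field_simp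
      have hcan : ((inner ℝ (φ a) (φ d) : ℝ)^2 * (inner ℝ (φ b) (φ d) : ℝ)^2
          * (inner ℝ (φ u₀) (φ d) : ℝ)^2) ≠ 0 :=
        mul_ne_zero (mul_ne_zero (pow_ne_zero 2 hΦad) (pow_ne_zero 2 hΦbd)) (pow_ne_zero 2 hΦud)
      apply mul_right_cancel₀ hcan
      calc (σ a * σ b * (inner ℝ (φ a) (φ b) : ℝ))
            * ((inner ℝ (φ a) (φ d) : ℝ)^2 * (inner ℝ (φ b) (φ d) : ℝ)^2 * (inner ℝ (φ u₀) (φ d) : ℝ)^2)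
          = (σ a * ((inner ℝ (φ a) (φ d) : ℝ) * (inner ℝ (φ u₀) (φ d) : ℝ)))
            * (σ b * ((inner ℝ (φ b) (φ d) : ℝ) * (inner ℝ (φ u₀) (φ d) : ℝ)))
            * ((inner ℝ (φ a) (φ b) : ℝ) * (inner ℝ (φ b) (φ d) : ℝ) * (inner ℝ (φ a) (φ d) : ℝ)) := by
            ring
        _ = ((inner ℝ a d : ℝ) * (inner ℝ u₀ d : ℝ)) * ((inner ℝ b d : ℝ) * (inner ℝ u₀ d : ℝ))
            * ((inner ℝ a b : ℝ) * (inner ℝ b d : ℝ) * (inner ℝ a d : ℝ)) := by rw [ea, eb, T5]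
        _ = (inner ℝ a b : ℝ) * ((inner ℝ a d : ℝ)^2 * (inner ℝ b d : ℝ)^2 * (inner ℝ u₀ d : ℝ)^2) := by
            ring
        _ = (inner ℝ a b : ℝ) * ((inner ℝ (φ a) (φ d) : ℝ)^2 * (inner ℝ (φ b) (φ d) : ℝ)^2
            * (inner ℝ (φ u₀) (φ d) : ℝ)^2) := by rw [sqad, sqbd, squd]
    · push_neg at hSab
      obtain ⟨t, rfl⟩ := dep_of_S_eq_zero hSab ha
      have ht : t ≠ 0 := by
        intro h; exact hb (by rw [h, zero_smul])
      obtain ⟨δ, hδpm, hδ⟩ := hscal hdim hbij hS ha t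
      have hΦab : (inner ℝ (φ a) (φ (t • a)) : ℝ) = δ * t * ‖a‖^2 := by
        rw [hδ, real_inner_smul_right, real_inner_self_eq_norm_sq,
          norm_phi hdim hbij hS a]
      have hpab : (inner ℝ a (t • a) : ℝ) = t * ‖a‖^2 := by
        rw [real_inner_smul_right, real_inner_self_eq_norm_sq]
      have hac₂ : (inner ℝ a (cf (t • a) hb) : ℝ) ≠ 0 := by
        rw [real_inner_smul_left] at hbc₂
        exact fun h => hbc₂ (by rw [h, mul_zero])
      have hSac₂ : S a (cf (t • a) hb) ≠ 0 := by
        intro h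
        obtain ⟨s, hs⟩ := dep_of_S_eq_zero h ha
        apply hspc₂
        have : s • a = (s/t) • (t • a) := by
          rw [smul_smul]; congr 1; field_simp
        rw [hs, this]
        exact Submodule.smul_mem _ _ (Submodule.subset_span (by simp))
      have hSuc₂ : S u₀ (cf (t • a) hb) ≠ 0 := by
        intro h
        obtain ⟨s, hs⟩ := dep_of_S_eq_zero h hu₀
        exact hspc₂ (hs ▸ Submodule.smul_mem _ s (Submodule.subset_span (by simp)))
      have hstar_a2 := TRsp hdim hbij hS ha hSac₂ hd6 hu₀ hSuc₂ hd4 hac₂ huc₂ hc₂d had hud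
      have hΦtac₂ : (inner ℝ (φ (t • a)) (φ (cf (t • a) hb)) : ℝ) = δ * t * (inner ℝ (φ a) (φ (cf (t • a) hb)) : ℝ) := by
        rw [hδ, real_inner_smul_left]
      have hptac₂ : (inner ℝ (t • a) (cf (t • a) hb) : ℝ) = t * (inner ℝ a (cf (t • a) hb) : ℝ) := real_inner_smul_left a (cf (t • a) hb) t
      have hδ2 : δ^2 = 1 := by rcases hδpm with rfl | rfl <;> norm_num
      have hσb : σ (t • a) = δ * (((inner ℝ a d : ℝ) * (inner ℝ u₀ d : ℝ))
          / ((inner ℝ (φ a) (φ d) : ℝ) * (inner ℝ (φ u₀) (φ d) : ℝ))) := by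
        have h0 : σ (t • a) = ((inner ℝ (φ (t • a)) (φ (cf (t • a) hb)) : ℝ) * (inner ℝ (φ u₀) (φ (cf (t • a) hb)) : ℝ))
            / ((inner ℝ (t • a) (cf (t • a) hb) : ℝ) * (inner ℝ u₀ (cf (t • a) hb) : ℝ)) := by
          simp [hσdef, dif_neg hb]
        rw [h0, hΦtac₂, hptac₂]
        field_simp
        linear_combination δ*hstar_a2
      have ea : σ a * ((inner ℝ (φ a) (φ d) : ℝ) * (inner ℝ (φ u₀) (φ d) : ℝ))
          = (inner ℝ a d : ℝ) * (inner ℝ u₀ d : ℝ) := by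
        rw [hσa]; field_simp
      have eb : σ (t • a) * ((inner ℝ (φ a) (φ d) : ℝ) * (inner ℝ (φ u₀) (φ d) : ℝ))
          = δ * ((inner ℝ a d : ℝ) * (inner ℝ u₀ d : ℝ)) := by
        rw [hσb]; field_simp
      have hcan : ((inner ℝ (φ a) (φ d) : ℝ)^2 * (inner ℝ (φ u₀) (φ d) : ℝ)^2) ≠ 0 :=
        mul_ne_zero (pow_ne_zero 2 hΦad) (pow_ne_zero 2 hΦud)
      apply mul_right_cancel₀ hcan
      calc (σ a * σ (t • a) * (inner ℝ (φ a) (φ (t • a)) : ℝ))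
            * ((inner ℝ (φ a) (φ d) : ℝ)^2 * (inner ℝ (φ u₀) (φ d) : ℝ)^2)
          = (σ a * ((inner ℝ (φ a) (φ d) : ℝ) * (inner ℝ (φ u₀) (φ d) : ℝ)))
            * (σ (t • a) * ((inner ℝ (φ a) (φ d) : ℝ) * (inner ℝ (φ u₀) (φ d) : ℝ)))
            * (inner ℝ (φ a) (φ (t • a)) : ℝ) := by ring
        _ = ((inner ℝ a d : ℝ) * (inner ℝ u₀ d : ℝ)) * (δ * ((inner ℝ a d : ℝ) * (inner ℝ u₀ d : ℝ)))
            * (δ * t * ‖a‖^2) := by rw [ea, eb, hΦab]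
        _ = (δ^2) * ((t * ‖a‖^2) * ((inner ℝ a d : ℝ)^2 * (inner ℝ u₀ d : ℝ)^2)) := by ring
        _ = (t * ‖a‖^2) * ((inner ℝ a d : ℝ)^2 * (inner ℝ u₀ d : ℝ)^2) := by rw [hδ2]; ring
        _ = (t * ‖a‖^2) * ((inner ℝ (φ a) (φ d) : ℝ)^2 * (inner ℝ (φ u₀) (φ d) : ℝ)^2) := by
            rw [sqad, squd]
        _ = (inner ℝ a (t • a) : ℝ) * ((inner ℝ (φ a) (φ d) : ℝ)^2 * (inner ℝ (φ u₀) (φ d) : ℝ)^2) := by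
            rw [hpab]
  -- the sign-corrected map preserves inner products
  have hψinner : ∀ a b : E, (inner ℝ (σ a • φ a) (σ b • φ b) : ℝ) = (inner ℝ a b : ℝ) := by
    intro a b
    rw [real_inner_smul_left, real_inner_smul_right]
    by_cases hab : (inner ℝ a b : ℝ) = 0
    · have h := hinn hdim hbij hS a b
      rw [hab] at h
      have hz : (inner ℝ (φ a) (φ b) : ℝ) = 0 :=
        pow_eq_zero_iff two_ne_zero |>.mp (by rw [h]; ring)
      rw [hz, hab]; ring
    · have ha : a ≠ 0 := by intro h; apply hab; rw [h]; simp
      have hb : b ≠ 0 := by intro h; apply hab; rw [h]; simp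
      have := key a b ha hb hab
      linear_combination this
  set ψ : E → E := fun a => σ a • φ a with hψdef
  have hψ : ∀ a b : E, (inner ℝ (ψ a) (ψ b) : ℝ) = (inner ℝ a b : ℝ) := hψinner
  have hadd : ∀ a b : E, ψ (a + b) = ψ a + ψ b := by
    intro a b
    have h : (inner ℝ (ψ (a+b) - ψ a - ψ b) (ψ (a+b) - ψ a - ψ b) : ℝ) = 0 := by
      simp only [inner_sub_left, inner_sub_right, hψ]
      simp only [inner_add_left, inner_add_right]
      ring
    have h0 := inner_self_eq_zero.mp h
    rw [sub_sub, sub_eq_zero] at h0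
    exact h0
  have hsmul : ∀ (t : ℝ) (a : E), ψ (t • a) = t • ψ a := by
    intro t a
    have h : (inner ℝ (ψ (t • a) - t • ψ a) (ψ (t • a) - t • ψ a) : ℝ) = 0 := by
      simp only [inner_sub_left, inner_sub_right, real_inner_smul_left,
        real_inner_smul_right, hψ]
      ring
    have h0 := inner_self_eq_zero.mp h
    rw [sub_eq_zero] at h0
    exact h0
  have hnorm : ∀ a : E, ‖ψ a‖ = ‖a‖ := by
    intro a
    have h := hψ a a
    rw [real_inner_self_eq_norm_sq, real_inner_self_eq_norm_sq] at h
    nlinarith [norm_nonneg (ψ a), norm_nonneg a]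
  have hinj : Function.Injective ψ := by
    intro a b h
    have h2 : (inner ℝ (a - b) (a - b) : ℝ) = 0 := by
      rw [inner_sub_left, inner_sub_right, inner_sub_right,
        ← hψ a a, ← hψ a b, ← hψ b a, ← hψ b b, h]
      ring
    have := inner_self_eq_zero.mp h2
    rwa [sub_eq_zero] at this
  have hsurj : Function.Surjective ψ := by
    intro z
    obtain ⟨a, ha⟩ := hbij.2 z
    rcases hσpm a with h1 | h1
    · exact ⟨a, by rw [hψdef]; simp only; rw [h1, ha, one_smul]⟩
    · refine ⟨-a, ?_⟩
      have : (-a) = (-1 : ℝ) • a := by rw [neg_one_smul]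
      rw [this, hsmul, neg_one_smul]
      rw [hψdef]
      simp only
      rw [h1, ha]
      simp
  set Lψ : E →ₗ[ℝ] E :=
    { toFun := ψ, map_add' := hadd, map_smul' := hsmul } with hLψ
  set LE := LinearEquiv.ofBijective Lψ ⟨hinj, hsurj⟩ with hLE
  refine ⟨σ, { toLinearEquiv := LE, norm_map' := hnorm }, hσpm, ?_⟩
  intro a
  show φ a = σ a • ψ a
  rw [hψdef]
  simp only
  rw [smul_smul]
  rcases hσpm a with h | h <;> rw [h] <;> norm_num
end

section
/- Let d ≥ 3 and let A : ℝ^d → ℝ^d be a linear operator. Then Area(A a, A b) = Area(a, b) holds for all a, b ∈ ℝ^d if and only if A is orthogonal (i.e. A is a linear isometry). -/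
private lemma aux_offdiag {pii pjj pkk pij pik pjk : ℝ}
    (R1 : pjj * pkk - pjk ^ 2 = 1) (R2 : pii * pkk - pik ^ 2 = 1)
    (Q1 : pik * pjk = pij * pkk) (Q2 : pij * pjk = pik * pjj)
    (Q3 : pij * pik = pjk * pii) (hkk : 0 < pkk) : pij = 0 := by
  have t1 : pij * pik * (pjj * pkk - pjk ^ 2) = 0 := by
    linear_combination (-pij * pjk) * Q1 - (pij * pkk) * Q2
  have h5 : pij * pik = 0 := by linear_combination t1 - (pij * pik) * R1
  have t2 : pij * pjk * (pii * pkk - pik ^ 2) = 0 := by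
    linear_combination (-pij * pik) * Q1 - (pij * pkk) * Q3
  have h6 : pij * pjk = 0 := by linear_combination t2 - (pij * pjk) * R2
  rcases mul_eq_zero.mp h5 with h | hik
  · exact h
  rcases mul_eq_zero.mp h6 with h | hjk
  · exact h
  have h7 : pij * pkk = 0 := by rw [← Q1, hik, hjk, mul_zero]
  rcases mul_eq_zero.mp h7 with h | h
  · exact h
  · exact absurd h (ne_of_gt hkk)

/-- for `d ≥ 3`, a linear operator on `ℝ^d` preserves the area of
parallelograms if and only if it is orthogonal, i.e. a linear isometry. -/
theorem stmt7 {d : ℕ} (hd : 3 ≤ d)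
    (A : EuclideanSpace ℝ (Fin d) →ₗ[ℝ] EuclideanSpace ℝ (Fin d)) :
    (∀ a b : EuclideanSpace ℝ (Fin d), parArea (A a) (A b) = parArea a b) ↔
      (∀ x : EuclideanSpace ℝ (Fin d), ‖A x‖ = ‖x‖) := by
  have key : ∀ a b : EuclideanSpace ℝ (Fin d),
      parArea a b = Real.sqrt ((inner ℝ a a : ℝ) * inner ℝ b b - (inner ℝ a b : ℝ) ^ 2) := by
    intro a b
    rw [parArea, real_inner_self_eq_norm_sq, real_inner_self_eq_norm_sq]
  constructor
  · intro h
    -- Step 1: the Gram determinant is preserved.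
    have hG : ∀ a b : EuclideanSpace ℝ (Fin d), (inner ℝ (A a) (A a) : ℝ) * inner ℝ (A b) (A b)
        - (inner ℝ (A a) (A b) : ℝ) ^ 2
        = (inner ℝ a a : ℝ) * inner ℝ b b - (inner ℝ a b : ℝ) ^ 2 := by
      intro a b
      have h1 := h a b
      rw [key, key] at h1
      have n1 : (0:ℝ) ≤ (inner ℝ (A a) (A a) : ℝ) * inner ℝ (A b) (A b)
          - (inner ℝ (A a) (A b) : ℝ) ^ 2 := by
        nlinarith [real_inner_mul_inner_self_le (A a) (A b)]
      have n2 : (0:ℝ) ≤ (inner ℝ a a : ℝ) * inner ℝ b b - (inner ℝ a b : ℝ) ^ 2 := by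
        nlinarith [real_inner_mul_inner_self_le a b]
      rw [← Real.sq_sqrt n1, ← Real.sq_sqrt n2, h1]
    -- Step 2: polarize in the second argument.
    have hB : ∀ a b c : EuclideanSpace ℝ (Fin d), (inner ℝ (A a) (A a) : ℝ) * inner ℝ (A b) (A c)
        - (inner ℝ (A a) (A b) : ℝ) * inner ℝ (A a) (A c)
        = (inner ℝ a a : ℝ) * inner ℝ b c - (inner ℝ a b : ℝ) * inner ℝ a c := by
      intro a b c
      have h1 := hG a (b + c)
      have h2 := hG a (b - c)
      simp only [map_add, map_sub, inner_add_left, inner_add_right,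
        inner_sub_left, inner_sub_right] at h1 h2
      linear_combination (h1 - h2) / 4
        + ((inner ℝ (A a) (A a) : ℝ) / 2) * real_inner_comm (A c) (A b)
        - ((inner ℝ a a : ℝ) / 2) * real_inner_comm c b
    -- Step 3: polarize in the first argument.
    have hT : ∀ a w b c : EuclideanSpace ℝ (Fin d), 2 * (inner ℝ (A a) (A w) : ℝ) * inner ℝ (A b) (A c)
        - (inner ℝ (A a) (A b) : ℝ) * inner ℝ (A w) (A c)
        - (inner ℝ (A w) (A b) : ℝ) * inner ℝ (A a) (A c)
        = 2 * (inner ℝ a w : ℝ) * inner ℝ b c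
          - (inner ℝ a b : ℝ) * inner ℝ w c - (inner ℝ w b : ℝ) * inner ℝ a c := by
      intro a w b c
      have h1 := hB (a + w) b c
      have h2 := hB (a - w) b c
      simp only [map_add, map_sub, inner_add_left, inner_add_right,
        inner_sub_left, inner_sub_right] at h1 h2
      linear_combination (h1 - h2) / 2
        + (inner ℝ (A b) (A c) : ℝ) * real_inner_comm (A w) (A a)
        - (inner ℝ b c : ℝ) * real_inner_comm w a
    classical
    -- the standard orthonormal basis
    set e : Fin d → EuclideanSpace ℝ (Fin d) := fun i => EuclideanSpace.single i (1:ℝ) with he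
    have hee1 : ∀ i : Fin d, (inner ℝ (e i) (e i) : ℝ) = 1 := by
      intro i; simp [he, EuclideanSpace.inner_single_left, EuclideanSpace.single_apply]
    have hee0 : ∀ i j : Fin d, i ≠ j → (inner ℝ (e i) (e j) : ℝ) = 0 := by
      intro i j hij
      simp [he, EuclideanSpace.inner_single_left, EuclideanSpace.single_apply, hij.symm]
    have third : ∀ i j : Fin d, ∃ k : Fin d, k ≠ i ∧ k ≠ j := by
      intro i j
      by_contra hcon
      push_neg at hcon
      have hsub : (Finset.univ : Finset (Fin d)) ⊆ {i, j} := by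
        intro k _
        simp only [Finset.mem_insert, Finset.mem_singleton]
        rcases eq_or_ne k i with hk | hk
        · exact Or.inl hk
        · exact Or.inr (hcon k hk)
      have h3 := Finset.card_le_card hsub
      have h2 : ({i, j} : Finset (Fin d)).card ≤ 2 := by
        refine le_trans (Finset.card_insert_le _ _) ?_
        simp
      rw [Finset.card_univ, Fintype.card_fin] at h3
      omega
    have hR1 : ∀ i j : Fin d, i ≠ j →
        (inner ℝ (A (e i)) (A (e i)) : ℝ) * inner ℝ (A (e j)) (A (e j))
          - (inner ℝ (A (e i)) (A (e j)) : ℝ) ^ 2 = 1 := by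
      intro i j hij
      have hg := hG (e i) (e j)
      rw [hee1 i, hee1 j, hee0 i j hij] at hg
      linear_combination hg
    have hQ : ∀ i j k : Fin d, i ≠ j → i ≠ k → j ≠ k →
        (inner ℝ (A (e i)) (A (e k)) : ℝ) * inner ℝ (A (e j)) (A (e k))
          = (inner ℝ (A (e i)) (A (e j)) : ℝ) * inner ℝ (A (e k)) (A (e k)) := by
      intro i j k hij hik hjk
      have ht := hT (e i) (e k) (e j) (e k)
      rw [hee0 i k hik, hee0 j k hjk, hee0 i j hij, hee0 k j (Ne.symm hjk), hee1 k] at ht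
      linear_combination ht + (inner ℝ (A (e i)) (A (e k)) : ℝ)
        * real_inner_comm (A (e j)) (A (e k))
    have hpos : ∀ i : Fin d, 0 < (inner ℝ (A (e i)) (A (e i)) : ℝ) := by
      intro i
      obtain ⟨j, hji, -⟩ := third i i
      have hr := hR1 i j (Ne.symm hji)
      have h1 : (0:ℝ) ≤ inner ℝ (A (e i)) (A (e i)) := real_inner_self_nonneg
      have h2 : (0:ℝ) ≤ inner ℝ (A (e j)) (A (e j)) := real_inner_self_nonneg
      nlinarith [sq_nonneg (inner ℝ (A (e i)) (A (e j)) : ℝ)]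
    have hdelta : ∀ i j : Fin d,
        (inner ℝ (A (e i)) (A (e j)) : ℝ) = inner ℝ (e i) (e j) := by
      have hoff : ∀ i j : Fin d, i ≠ j → (inner ℝ (A (e i)) (A (e j)) : ℝ) = 0 := by
        intro i j hij
        obtain ⟨k, hki, hkj⟩ := third i j
        have Q1 := hQ i j k hij (Ne.symm hki) (Ne.symm hkj)
        have Q2 := hQ i k j (Ne.symm hki) hij hkj
        rw [real_inner_comm (A (e j)) (A (e k))] at Q2
        have Q3 := hQ j k i (Ne.symm hkj) (Ne.symm hij) hki
        rw [real_inner_comm (A (e i)) (A (e j)), real_inner_comm (A (e i)) (A (e k))] at Q3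
        have R1 := hR1 j k (Ne.symm hkj)
        have R2 := hR1 i k (Ne.symm hki)
        exact aux_offdiag R1 R2 Q1 Q2 Q3 (hpos k)
      intro i j
      rcases eq_or_ne i j with rfl | hij
      · rw [hee1 i]
        obtain ⟨k, hki, -⟩ := third i i
        obtain ⟨j', hji, hjk⟩ := third i k
        have P1 : (inner ℝ (A (e i)) (A (e i)) : ℝ) * inner ℝ (A (e j')) (A (e j')) = 1 := by
          have := hR1 i j' (Ne.symm hji)
          rw [hoff i j' (Ne.symm hji)] at this
          linear_combination this
        have P2 : (inner ℝ (A (e i)) (A (e i)) : ℝ) * inner ℝ (A (e k)) (A (e k)) = 1 := by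
          have := hR1 i k (Ne.symm hki)
          rw [hoff i k (Ne.symm hki)] at this
          linear_combination this
        have P3 : (inner ℝ (A (e j')) (A (e j')) : ℝ) * inner ℝ (A (e k)) (A (e k)) = 1 := by
          have := hR1 j' k hjk
          rw [hoff j' k hjk] at this
          linear_combination this
        have hsq : (inner ℝ (A (e i)) (A (e i)) : ℝ) ^ 2 = 1 := by
          linear_combination ((inner ℝ (A (e i)) (A (e i)) : ℝ) * inner ℝ (A (e k)) (A (e k))) * P1
            + P2 - ((inner ℝ (A (e i)) (A (e i)) : ℝ) ^ 2) * P3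
        have hp := hpos i
        have hfac : ((inner ℝ (A (e i)) (A (e i)) : ℝ) - 1)
            * ((inner ℝ (A (e i)) (A (e i)) : ℝ) + 1) = 0 := by linear_combination hsq
        rcases mul_eq_zero.mp hfac with hz | hz
        · linarith
        · linarith
      · rw [hee0 i j hij]
        exact hoff i j hij
    -- conclude via bilinearity
    let B1 : EuclideanSpace ℝ (Fin d) →ₗ[ℝ] EuclideanSpace ℝ (Fin d) →ₗ[ℝ] ℝ := LinearMap.mk₂ ℝ (fun x y => (inner ℝ (A x) (A y) : ℝ))
      (fun x x' y => by simp [map_add, inner_add_left])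
      (fun c x y => by simp only [map_smul, real_inner_smul_left, smul_eq_mul])
      (fun x y y' => by simp [map_add, inner_add_right])
      (fun c x y => by simp only [map_smul, real_inner_smul_right, smul_eq_mul])
    let B2 : EuclideanSpace ℝ (Fin d) →ₗ[ℝ] EuclideanSpace ℝ (Fin d) →ₗ[ℝ] ℝ := LinearMap.mk₂ ℝ (fun x y => (inner ℝ x y : ℝ))
      (fun x x' y => by simp [inner_add_left])
      (fun c x y => by simp only [real_inner_smul_left, smul_eq_mul])
      (fun x y y' => by simp [inner_add_right])
      (fun c x y => by simp only [real_inner_smul_right, smul_eq_mul])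
    have hBB : B1 = B2 := by
      apply LinearMap.ext_basis (EuclideanSpace.basisFun (Fin d) ℝ).toBasis
        (EuclideanSpace.basisFun (Fin d) ℝ).toBasis
      intro i j
      have hb : ((EuclideanSpace.basisFun (Fin d) ℝ).toBasis : Fin d → EuclideanSpace ℝ (Fin d)) = e := by
        funext i
        rw [OrthonormalBasis.coe_toBasis, EuclideanSpace.basisFun_apply]
      rw [hb]
      simpa [B1, B2, LinearMap.mk₂_apply] using hdelta i j
    intro x
    have hx : (inner ℝ (A x) (A x) : ℝ) = inner ℝ x x := by
      have h1 := DFunLike.congr_fun (DFunLike.congr_fun hBB x) x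
      simpa [B1, B2, LinearMap.mk₂_apply] using h1
    rw [norm_eq_sqrt_real_inner, norm_eq_sqrt_real_inner, hx]
  · intro h a b
    have hinner : (inner ℝ (A a) (A b) : ℝ) = inner ℝ a b := by
      have h1 := h (a + b)
      have ha := h a
      have hb := h b
      rw [map_add] at h1
      have hsq : ‖A a + A b‖ ^ 2 = ‖a + b‖ ^ 2 := by rw [h1]
      have ha2 : ‖A a‖ ^ 2 = ‖a‖ ^ 2 := by rw [ha]
      have hb2 : ‖A b‖ ^ 2 = ‖b‖ ^ 2 := by rw [hb]
      have e1 := norm_add_sq_real (A a) (A b)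
      have e2 := norm_add_sq_real a b
      linarith
    rw [parArea, parArea, hinner, h, h]
end

section
/- Let E be a real Hilbert space with dim E ≥ 2 and let φ : E → E be a map such that Area(φ(a), φ(b)) = Area(a, b) for all a, b ∈ E. Then for every v ∈ E and every t ∈ ℝ one has φ(t · v) = t · φ(v) or φ(t · v) = −t · φ(v). -/
section Aux

variable {E : Type*} [NormedAddCommGroup E] [InnerProductSpace ℝ E]

/-- The squared area. -/
noncomputable def parG (a b : E) : ℝ := ‖a‖ ^ 2 * ‖b‖ ^ 2 - (inner ℝ a b : ℝ) ^ 2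

lemma parG_nonneg (a b : E) : 0 ≤ parG a b := by
  have h := abs_real_inner_le_norm a b
  have h2 : (inner ℝ a b : ℝ) ^ 2 ≤ (‖a‖ * ‖b‖) ^ 2 := by
    rw [← sq_abs]
    exact pow_le_pow_left₀ (abs_nonneg _) h 2
  unfold parG; nlinarith

lemma parArea_eq (a b : E) : parArea a b = Real.sqrt (parG a b) := rfl

lemma parG_comm (a b : E) : parG a b = parG b a := by
  simp only [parG, real_inner_comm a b]; ring

lemma parG_smul_left (t : ℝ) (a b : E) : parG (t • a) b = t ^ 2 * parG a b := by
  simp only [parG, norm_smul, real_inner_smul_left, mul_pow, Real.norm_eq_abs, sq_abs]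
  ring

lemma parG_zero_left (b : E) : parG (0 : E) b = 0 := by simp [parG]

lemma parG_self (a : E) : parG a a = 0 := by
  simp only [parG, real_inner_self_eq_norm_sq]
  ring

lemma parG_eq_zero_iff (a b : E) : parG a b = 0 ↔ a = 0 ∨ ∃ r : ℝ, b = r • a := by
  have key : ‖(inner ℝ a b : ℝ)‖ = ‖a‖ * ‖b‖ ↔ a = 0 ∨ ∃ r : ℝ, b = r • a :=
    (norm_inner_eq_norm_tfae (𝕜 := ℝ) a b).out 0 2
  rw [← key, Real.norm_eq_abs,
    ← sq_eq_sq₀ (abs_nonneg _) (by positivity : (0:ℝ) ≤ ‖a‖ * ‖b‖), sq_abs]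
  unfold parG
  constructor <;> intro h <;> nlinarith

end Aux

/-- an area-preserving map of a real Hilbert space of dimension at
least `2` is quasi-homogeneous: `φ(t v) = ± t φ(v)`. -/
theorem stmt9 {E : Type*} [NormedAddCommGroup E] [InnerProductSpace ℝ E] [CompleteSpace E]
    (hdim : 2 ≤ Module.rank ℝ E)
    (φ : E → E)
    (hφ : ∀ a b : E, parArea (φ a) (φ b) = parArea a b) :
    ∀ (v : E) (t : ℝ), φ (t • v) = t • φ v ∨ φ (t • v) = (-t) • φ v := by
  -- upgrade parArea equality to parG equality
  have hG : ∀ a b : E, parG (φ a) (φ b) = parG a b := by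
    intro a b
    have := hφ a b
    rw [parArea_eq, parArea_eq] at this
    exact (Real.sqrt_inj (parG_nonneg _ _) (parG_nonneg _ _)).mp this
  have hrank : (1 : Cardinal) < Module.rank ℝ E := lt_of_lt_of_le Cardinal.one_lt_two hdim
  -- find two linearly independent vectors
  have hnt : Nontrivial E := by
    rw [← rank_pos_iff_nontrivial (R := ℝ)]
    exact lt_trans one_pos hrank
  obtain ⟨a, ha⟩ := exists_ne (0 : E)
  obtain ⟨b, hab⟩ := exists_linearIndependent_pair_of_one_lt_rank hrank ha
  have hGab : parG a b ≠ 0 := by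
    intro h
    rcases (parG_eq_zero_iff a b).mp h with rfl | ⟨r, rfl⟩
    · exact ha rfl
    · have := (LinearIndependent.pair_iff.mp hab) (-r) 1 (by simp)
      simp at this
  -- a vector whose parG with every φ c vanishes is zero
  have himg0 : ∀ x : E, (∀ c : E, parG x (φ c) = 0) → x = 0 := by
    intro x hx
    by_contra hx0
    obtain ⟨r₁, hr₁⟩ := (parG_eq_zero_iff x (φ a)).mp (hx a) |>.resolve_left hx0
    obtain ⟨r₂, hr₂⟩ := (parG_eq_zero_iff x (φ b)).mp (hx b) |>.resolve_left hx0
    have : parG (φ a) (φ b) = 0 := by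
      rw [hr₁, hr₂, parG_smul_left, parG_comm, parG_smul_left, parG_self]
      ring
    rw [hG] at this
    exact hGab this
  intro v t
  have hx : ∀ c : E, parG (φ (t • v)) (φ c) = t ^ 2 * parG (φ v) (φ c) := by
    intro c
    rw [hG, hG, parG_smul_left]
  by_cases hu : φ v = 0
  · left
    rw [hu, smul_zero]
    apply himg0
    intro c
    rw [hx, hu, parG_zero_left, mul_zero]
  · -- v ≠ 0
    have hv : v ≠ 0 := by
      rintro rfl
      apply hu
      apply himg0
      intro c
      rw [hG, parG_zero_left]
    obtain ⟨b', hb'⟩ := exists_linearIndependent_pair_of_one_lt_rank hrank hv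
    have hGvb' : parG v b' ≠ 0 := by
      intro h
      rcases (parG_eq_zero_iff v b').mp h with rfl | ⟨r, rfl⟩
      · exact hv rfl
      · have := (LinearIndependent.pair_iff.mp hb') (-r) 1 (by simp)
        simp at this
    -- φ (t • v) is a multiple of φ v
    have hdep : parG (φ v) (φ (t • v)) = 0 := by
      rw [parG_comm, hG, parG_smul_left, parG_self, mul_zero]
    obtain ⟨s, hs⟩ := (parG_eq_zero_iff _ _).mp hdep |>.resolve_left hu
    -- compare coefficients using b'
    have hb'G : parG (φ v) (φ b') = parG v b' := hG v b'
    have heq : s ^ 2 * parG v b' = t ^ 2 * parG v b' := by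
      have := hx b'
      rw [hs, parG_smul_left, hb'G] at this
      exact this
    have hst : s ^ 2 = t ^ 2 := mul_right_cancel₀ hGvb' heq
    rcases sq_eq_sq_iff_eq_or_eq_neg.mp hst with h | h
    · left; rw [hs, h]
    · right; rw [hs, h]
end

section
/- Let E be a real Hilbert space with dim E ≥ 2 and let φ : E → E be a map such that Area(φ(a), φ(b)) = Area(a, b) for all a, b ∈ E. Then φ(v) = 0 holds if and only if v = 0, and for all a, b ∈ E the vectors φ(a), φ(b) are linearly independent if and only if a, b are linearly independent. -/
section Aux

variable {E : Type*} [NormedAddCommGroup E] [InnerProductSpace ℝ E]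

lemma key_li_iff (a b : E) :
    LinearIndependent ℝ ![a, b] ↔ (inner ℝ a b : ℝ) ^ 2 < ‖a‖ ^ 2 * ‖b‖ ^ 2 := by
  constructor
  · intro h
    rw [linearIndependent_fin2] at h
    simp only [Matrix.cons_val_one, Matrix.head_cons, Matrix.cons_val_zero] at h
    obtain ⟨hb, hab⟩ := h
    by_contra hcs
    push_neg at hcs
    have hle : (inner ℝ a b : ℝ) ^ 2 ≤ ‖a‖ ^ 2 * ‖b‖ ^ 2 := by
      have := real_inner_mul_inner_self_le a b
      rw [real_inner_self_eq_norm_sq, real_inner_self_eq_norm_sq] at this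
      nlinarith [this]
    have heq : (inner ℝ a b : ℝ) ^ 2 = ‖a‖ ^ 2 * ‖b‖ ^ 2 := le_antisymm hle hcs
    have hb' : (0:ℝ) < ‖b‖ := norm_pos_iff.2 hb
    have hfac : ((inner ℝ a b : ℝ) - ‖a‖ * ‖b‖) * ((inner ℝ a b : ℝ) + ‖a‖ * ‖b‖) = 0 := by
      linear_combination heq
    rcases mul_eq_zero.1 hfac with h1 | h1
    · have habs : (inner ℝ a b : ℝ) = ‖a‖ * ‖b‖ := by linarith
      have h2 := inner_eq_norm_mul_iff_real.1 habs
      exact hab (‖a‖ / ‖b‖) (by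
        rw [div_eq_inv_mul, mul_smul, ← h2, smul_smul, inv_mul_cancel₀ hb'.ne', one_smul])
    · have habs : (inner ℝ (-a) b : ℝ) = ‖(-a)‖ * ‖b‖ := by
        rw [inner_neg_left, norm_neg]; linarith
      have h2 := inner_eq_norm_mul_iff_real.1 habs
      rw [norm_neg, smul_neg] at h2
      exact hab (-(‖a‖ / ‖b‖)) (by
        rw [neg_smul, div_eq_inv_mul, mul_smul, ← h2, smul_neg, neg_neg, smul_smul,
          inv_mul_cancel₀ hb'.ne', one_smul])
  · intro h
    rw [linearIndependent_fin2]
    simp only [Matrix.cons_val_one, Matrix.head_cons, Matrix.cons_val_zero]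
    constructor
    · rintro rfl
      simp at h
    · rintro c rfl
      rw [real_inner_smul_left, real_inner_self_eq_norm_sq, norm_smul] at h
      simp only [Real.norm_eq_abs, mul_pow, sq_abs] at h
      nlinarith [h]

lemma area_pos_iff (a b : E) : 0 < parArea a b ↔ LinearIndependent ℝ ![a, b] := by
  rw [parArea, Real.sqrt_pos, sub_pos, key_li_iff]

lemma not_li_exists (x y : E) (hy : y ≠ 0) (h : ¬ LinearIndependent ℝ ![x, y]) :
    ∃ c : ℝ, c • y = x := by
  rw [linearIndependent_fin2] at h
  simp only [Matrix.cons_val_one, Matrix.head_cons, Matrix.cons_val_zero] at h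
  push_neg at h
  exact h hy

lemma exists_indep {E : Type*} [NormedAddCommGroup E] [InnerProductSpace ℝ E]
    (hdim : 2 ≤ Module.rank ℝ E) (v : E) (hv : v ≠ 0) :
    ∃ w : E, LinearIndependent ℝ ![w, v] := by
  have hspan : (Submodule.span ℝ {v} : Submodule ℝ E) ≠ ⊤ := by
    intro htop
    have h1 : Module.rank ℝ (Submodule.span ℝ ({v} : Set E)) ≤ 1 := by
      simpa using rank_span_le ({v} : Set E)
    rw [htop, rank_top] at h1
    exact absurd (hdim.trans h1) (by norm_num)
  obtain ⟨w, hw⟩ : ∃ w : E, w ∉ Submodule.span ℝ ({v} : Set E) := by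
    by_contra hc
    push_neg at hc
    exact hspan (Submodule.eq_top_iff'.2 hc)
  refine ⟨w, linearIndependent_fin2.2 ⟨?_, ?_⟩⟩
  · simpa using hv
  · intro c hc
    simp only [Matrix.cons_val_one, Matrix.head_cons, Matrix.cons_val_zero] at hc
    exact hw (hc ▸ Submodule.smul_mem _ c (Submodule.mem_span_singleton_self v))

end Aux

/-- an area-preserving map of a real Hilbert space of dimension at
least `2` sends `0` to `0` only, and preserves linear independence of pairs of
vectors in both directions. -/
theorem stmt10 {E : Type*} [NormedAddCommGroup E] [InnerProductSpace ℝ E] [CompleteSpace E]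
    (hdim : 2 ≤ Module.rank ℝ E)
    (φ : E → E)
    (hφ : ∀ a b : E, parArea (φ a) (φ b) = parArea a b) :
    (∀ v : E, φ v = 0 ↔ v = 0) ∧
    (∀ a b : E, LinearIndependent ℝ ![φ a, φ b] ↔ LinearIndependent ℝ ![a, b]) := by
  have hli : ∀ a b : E, LinearIndependent ℝ ![φ a, φ b] ↔ LinearIndependent ℝ ![a, b] := by
    intro a b
    rw [← area_pos_iff, ← area_pos_iff, hφ]
  have hnontriv : Nontrivial E := by
    rw [← rank_pos_iff_nontrivial (R := ℝ)]
    calc (0 : Cardinal) < 2 := by norm_num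
    _ ≤ Module.rank ℝ E := hdim
  have hne : ∀ v : E, v ≠ 0 → φ v ≠ 0 := by
    intro v hv
    obtain ⟨w, hw⟩ := exists_indep hdim v hv
    have := (hli w v).2 hw
    rw [linearIndependent_fin2] at this
    simpa using this.1
  have h0 : φ 0 = 0 := by
    obtain ⟨v, hv⟩ := exists_ne (0 : E)
    obtain ⟨w, hw⟩ := exists_indep hdim v hv
    have hliφ : LinearIndependent ℝ ![φ w, φ v] := (hli w v).2 hw
    have hφv : φ v ≠ 0 := by
      have := linearIndependent_fin2.1 hliφ
      simpa using this.1
    have hφw : φ w ≠ 0 := by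
      have := linearIndependent_fin2.1 ((hli v w).2 (by
        rw [key_li_iff] at hw ⊢
        rw [real_inner_comm, mul_comm]
        exact hw))
      simpa using this.1
    have hzw : ¬ LinearIndependent ℝ ![φ 0, φ w] := by
      intro h
      have hp := (area_pos_iff (φ 0) (φ w)).2 h
      rw [hφ] at hp
      simp [parArea] at hp
    have hzv : ¬ LinearIndependent ℝ ![φ 0, φ v] := by
      intro h
      have hp := (area_pos_iff (φ 0) (φ v)).2 h
      rw [hφ] at hp
      simp [parArea] at hp
    obtain ⟨c, hc⟩ := not_li_exists _ _ hφw hzw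
    obtain ⟨d, hd⟩ := not_li_exists _ _ hφv hzv
    have : c • φ w + (-d) • φ v = 0 := by
      rw [neg_smul, hc, hd]
      abel
    have hcd := hliφ.eq_zero_of_pair this
    rw [← hc, hcd.1, zero_smul]
  refine ⟨fun v => ⟨?_, ?_⟩, hli⟩
  · intro hv
    by_contra hvne
    exact hne v hvne hv
  · rintro rfl
    exact h0
end
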